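/- arXiv:1511.03832 — 10 statements merged into one kernel-verified Lean document; each statement's English description precedes it below -/
import Mathlib

section
/- If A is an essential domain (i.e., A equals the intersection of its localizations A_P over all primes P such that A_P is a valuation domain) and B is an overring of A such that the induced map Spec(B) → Spec(A) is surjective, then A = B. -/
open scoped nonZeroDivisors

section Defs

variable (A : Type*) [CommRing A] [IsDomain A]

/-- The localization of `A` at the prime `P`, realized as a subset of the `A`-algebra `K`. -/
def locSet (K : Type*) [CommRing K] [Algebra A K] (P : Ideal A) : Set K :=
  {x | ∃ a s : A, s ∉ P ∧ x * algebraMap A K s = algebraMap A K a}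

/-- `P` is a valued prime of `A` if `A_P` is a valuation domain. -/
def ValuedPrime (P : Ideal A) : Prop :=
  ∃ h : P.IsPrime, ValuationRing (Localization.AtPrime P)

/-- `A` is an essential domain if it is the intersection of its localizations at valued primes. -/
def IsEssential : Prop :=
  Set.range (algebraMap A (FractionRing A)) =
    ⋂ P ∈ {P : Ideal A | ValuedPrime A P}, locSet A (FractionRing A) P

/-- An overring `B` of `A` is a lying over overring if `Spec B → Spec A` is surjective. -/
def LyingOverOverring (B : Subalgebra A (FractionRing A)) : Prop :=
  ∀ P : Ideal A, P.IsPrime → ∃ Q : Ideal B, Q.IsPrime ∧ Q.comap (algebraMap A B) = P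

/-- An overring `B` of `A` is a going down overring if going down holds for `A ⊆ B`. -/
def GoingDownOverring (B : Subalgebra A (FractionRing A)) : Prop :=
  ∀ P' P : Ideal A, P'.IsPrime → P.IsPrime → P' ≤ P →
    ∀ Q : Ideal B, Q.IsPrime → Q.comap (algebraMap A B) = P →
      ∃ Q' : Ideal B, Q'.IsPrime ∧ Q' ≤ Q ∧ Q'.comap (algebraMap A B) = P'

/-- `A` is perinormal if every going down overring of `A` is a flat `A`-module. -/
def Perinormal : Prop :=
  ∀ B : Subalgebra A (FractionRing A), GoingDownOverring A B → Module.Flat A B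

/-- `A` is globally perinormal if every going down overring of `A` is a fraction ring of `A`. -/
def GloballyPerinormal : Prop :=
  ∀ B : Subalgebra A (FractionRing A), GoingDownOverring A B →
    ∃ S : Submonoid A, IsLocalization S B

/-- `A` is a P-domain if `A_P` is a valuation domain for each prime `P` minimal over an ideal
of the form `(Aa : b)`. -/
def IsPDomain : Prop :=
  ∀ P : Ideal A,
    (∃ a b : A, P ∈ ((Ideal.span {a} : Ideal A).colon (Ideal.span {b})).minimalPrimes) →
      ValuedPrime A P

/-- `A` is a PVMD if for every finitely generated nonzero ideal `I` there is a finitely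
generated nonzero ideal `J` with `(IJ)_v` principal. -/
def IsPVMD : Prop :=
  ∀ I : Ideal A, I ≠ ⊥ → I.FG → ∃ J : Ideal A, J ≠ ⊥ ∧ J.FG ∧
    ∃ x : FractionRing A,
      1 / (1 / ((I : FractionalIdeal A⁰ (FractionRing A)) * (J : FractionalIdeal A⁰ (FractionRing A)))) =
        FractionalIdeal.spanSingleton A⁰ x

/-- `A` is treed if incomparable primes of `A` are comaximal. -/
def Treed : Prop :=
  ∀ P Q : Ideal A, P.IsPrime → Q.IsPrime → ¬ P ≤ Q → ¬ Q ≤ P → P ⊔ Q = ⊤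

/-- `A` is a Prüfer domain if all its localizations at maximal ideals are valuation domains. -/
def IsPrueferDom : Prop :=
  ∀ M : Ideal A, M.IsMaximal → ValuedPrime A M

/-- The set of height one primes of `A`. -/
def HtOnePrimes : Set (Ideal A) :=
  {P : Ideal A | P.IsPrime ∧ P ≠ ⊥ ∧ ∀ Q : Ideal A, Q.IsPrime → Q < P → Q = ⊥}

/-- `A` is a generalized Krull domain. -/
def IsGenKrull : Prop :=
  (Set.range (algebraMap A (FractionRing A)) =
      ⋂ P ∈ HtOnePrimes A, locSet A (FractionRing A) P) ∧
  (∀ a : A, a ≠ 0 → {P ∈ HtOnePrimes A | a ∈ P}.Finite) ∧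
  (∀ P ∈ HtOnePrimes A, ValuedPrime A P)

/-- `A` is an almost GCD domain. -/
def IsAGCD : Prop :=
  ∀ x y : A, ∃ n : ℕ, 1 ≤ n ∧
    ∃ z : A, Ideal.span {x ^ n} ⊓ Ideal.span {y ^ n} = Ideal.span {z}

/-- `A` has torsion class group (stated for a PVMD): every finitely generated nonzero
fractional ideal has a power whose `v`-closure is principal. -/
def TorsionClassGroup : Prop :=
  ∀ H : FractionalIdeal A⁰ (FractionRing A), H ≠ 0 →
    (H : Submodule A (FractionRing A)).FG →
      ∃ n : ℕ, 1 ≤ n ∧ ∃ x : FractionRing A,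
        1 / (1 / (H ^ n)) = FractionalIdeal.spanSingleton A⁰ x

/-- An overring `B` of `A` is t-linked over `A`. -/
def TLinked (B : Subalgebra A (FractionRing A)) : Prop :=
  ∀ I : Ideal A, I ≠ ⊥ → I.FG →
    ({x : FractionRing A | ∀ y ∈ I, x * algebraMap A (FractionRing A) y ∈
        Set.range (algebraMap A (FractionRing A))} =
      Set.range (algebraMap A (FractionRing A))) →
    ({x : FractionRing A | ∀ y ∈ I, x * algebraMap A (FractionRing A) y ∈ (B : Set (FractionRing A))} =
      (B : Set (FractionRing A)))

end Defs

/-- An essential domain has no proper lying over overring. -/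
theorem essential_no_proper_lying_over_overring
    (A : Type*) [CommRing A] [IsDomain A] (hA : IsEssential A)
    (B : Subalgebra A (FractionRing A)) (hB : LyingOverOverring A B) :
    B = ⊥ := by
  rw [eq_bot_iff]
  intro x hx
  rw [Algebra.mem_bot]
  rw [IsEssential] at hA
  rw [show Set.range (algebraMap A (FractionRing A)) =
      ⋂ P ∈ {P : Ideal A | ValuedPrime A P}, locSet A (FractionRing A) P from hA]
  refine Set.mem_iInter₂.2 fun P hP => ?_
  obtain ⟨hPp, hV⟩ := hP
  have hinj : Function.Injective (algebraMap A (Localization.AtPrime P)) :=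
    IsLocalization.injective _ P.primeCompl_le_nonZeroDivisors
  have hKinj : Function.Injective (algebraMap A (FractionRing A)) := IsFractionRing.injective A (FractionRing A)
  obtain ⟨⟨a, b⟩, hab⟩ := IsLocalization.surj A⁰ x
  have hb0 : algebraMap A (FractionRing A) (b : A) ≠ 0 := fun h => nonZeroDivisors.ne_zero b.2
    (hKinj (h.trans (map_zero _).symm))
  obtain ⟨c, hc | hc⟩ := ValuationRing.cond (algebraMap A (Localization.AtPrime P) a) (algebraMap A (Localization.AtPrime P) b)
  · -- a * c = b in L
    obtain ⟨⟨r, s⟩, hrs⟩ := IsLocalization.surj P.primeCompl c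
    have key : a * r = b * s := by
      apply hinj
      rw [map_mul, map_mul]
      calc algebraMap A (Localization.AtPrime P) a * algebraMap A (Localization.AtPrime P) r = algebraMap A (Localization.AtPrime P) a * (c * algebraMap A (Localization.AtPrime P) s) := by
            rw [hrs]
        _ = (algebraMap A (Localization.AtPrime P) a * c) * algebraMap A (Localization.AtPrime P) s := by ring
        _ = algebraMap A (Localization.AtPrime P) b * algebraMap A (Localization.AtPrime P) s := by rw [hc]
    have hx2 : x * algebraMap A (FractionRing A) r = algebraMap A (FractionRing A) s := by
      apply mul_left_cancel₀ hb0
      calc algebraMap A (FractionRing A) b * (x * algebraMap A (FractionRing A) r)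
          = (x * algebraMap A (FractionRing A) b) * algebraMap A (FractionRing A) r := by ring
        _ = algebraMap A (FractionRing A) a * algebraMap A (FractionRing A) r := by rw [hab]
        _ = algebraMap A (FractionRing A) (a * r) := by rw [map_mul]
        _ = algebraMap A (FractionRing A) (b * s) := by rw [key]
        _ = algebraMap A (FractionRing A) b * algebraMap A (FractionRing A) s := by rw [map_mul]
    by_cases hr : r ∈ P
    · -- contradiction via lying over
      exfalso
      obtain ⟨Q, hQ, hQP⟩ := hB P hPp
      have hmem : (⟨x, hx⟩ : B) * algebraMap A B r = algebraMap A B s := by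
        apply Subtype.ext
        push_cast
        exact hx2
      have hrQ : algebraMap A B r ∈ Q := by
        rw [← hQP] at hr; exact hr
      have hsQ : algebraMap A B s ∈ Q := by
        rw [← hmem]; exact Q.mul_mem_left _ hrQ
      have hsc : (s : A) ∈ Q.comap (algebraMap A B) := hsQ
      rw [hQP] at hsc
      exact s.2 hsc
    · exact ⟨s, r, hr, hx2⟩
  · -- b * c = a in L
    obtain ⟨⟨a', s'⟩, h'⟩ := IsLocalization.surj P.primeCompl c
    have key : b * a' = a * s' := by
      apply hinj
      rw [map_mul, map_mul]
      calc algebraMap A (Localization.AtPrime P) b * algebraMap A (Localization.AtPrime P) a' = algebraMap A (Localization.AtPrime P) b * (c * algebraMap A (Localization.AtPrime P) s') := by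
            rw [h']
        _ = (algebraMap A (Localization.AtPrime P) b * c) * algebraMap A (Localization.AtPrime P) s' := by ring
        _ = algebraMap A (Localization.AtPrime P) a * algebraMap A (Localization.AtPrime P) s' := by rw [hc]
    refine ⟨a', s', s'.2, ?_⟩
    apply mul_left_cancel₀ hb0
    calc algebraMap A (FractionRing A) b * (x * algebraMap A (FractionRing A) s')
        = (x * algebraMap A (FractionRing A) b) * algebraMap A (FractionRing A) s' := by ring
      _ = algebraMap A (FractionRing A) a * algebraMap A (FractionRing A) s' := by rw [hab]
      _ = algebraMap A (FractionRing A) (a * s') := by rw [map_mul]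
      _ = algebraMap A (FractionRing A) (b * a') := by rw [key]
      _ = algebraMap A (FractionRing A) b * algebraMap A (FractionRing A) a' := by rw [map_mul]
end

section
/- If A is an essential domain, P is a valued prime of A, and B is an overring of A with a prime P' of B lying over P, then A_P = B_{P'}. -/
open scoped nonZeroDivisors

/-- Valuation dichotomy for the localization at a valued prime, as subsets of the
fraction field. -/
lemma loc_dichotomy (A : Type*) [CommRing A] [IsDomain A] (P : Ideal A)
    (hPp : P.IsPrime) [ValuationRing (Localization.AtPrime P)]
    (x : FractionRing A) (hx : x ≠ 0) :
    x ∈ locSet A (FractionRing A) P ∨ x⁻¹ ∈ locSet A (FractionRing A) P := by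
  obtain ⟨⟨a, b⟩, hxab⟩ := IsLocalization.mk'_surjective A⁰ x
  simp only at hxab
  have hxb : x * algebraMap A (FractionRing A) (b : A) = algebraMap A (FractionRing A) a := by
    rw [← hxab]; exact IsLocalization.mk'_spec (FractionRing A) a b
  have hbne : algebraMap A (FractionRing A) (b : A) ≠ 0 := fun h =>
    nonZeroDivisors.coe_ne_zero b ((IsFractionRing.to_map_eq_zero_iff (K := FractionRing A)).mp h)
  obtain ⟨c, hc⟩ := ValuationRing.cond (algebraMap A (Localization.AtPrime P) a)
    (algebraMap A (Localization.AtPrime P) (b : A))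
  obtain ⟨⟨a₀, s⟩, hcs⟩ := IsLocalization.mk'_surjective P.primeCompl c
  simp only at hcs
  have key : ∀ u v : A,
      algebraMap A (Localization.AtPrime P) u * c = algebraMap A (Localization.AtPrime P) v →
      ∃ t : A, t ∉ P ∧ t * (u * a₀) = t * (v * (s : A)) := by
    intro u v huv
    have h1 : algebraMap A (Localization.AtPrime P) (u * a₀) =
        algebraMap A (Localization.AtPrime P) (v * (s : A)) := by
      rw [map_mul, map_mul, ← IsLocalization.mk'_spec (Localization.AtPrime P) a₀ s, hcs,
        ← mul_assoc, huv]
    obtain ⟨t, ht⟩ :=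
      (IsLocalization.eq_iff_exists P.primeCompl (Localization.AtPrime P)).mp h1
    exact ⟨(t : A), t.2, ht⟩
  rcases hc with hc | hc
  · -- algebraMap a * c = algebraMap b : then x⁻¹ ∈ locSet
    obtain ⟨t, htP, ht⟩ := key a (b : A) hc
    right
    refine ⟨t * a₀, t * (s : A), fun h => ?_, ?_⟩
    · rcases hPp.mem_or_mem h with h | h
      · exact htP h
      · exact s.2 h
    · have h2 : x * algebraMap A (FractionRing A) (t * a₀) =
          algebraMap A (FractionRing A) (t * (s : A)) := by
        have h3 : x * algebraMap A (FractionRing A) (t * a₀) *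
            algebraMap A (FractionRing A) (b : A) =
            algebraMap A (FractionRing A) (t * (s : A)) *
              algebraMap A (FractionRing A) (b : A) := by
          calc x * algebraMap A (FractionRing A) (t * a₀) *
                algebraMap A (FractionRing A) (b : A)
              = (x * algebraMap A (FractionRing A) (b : A)) *
                algebraMap A (FractionRing A) (t * a₀) := by ring
            _ = algebraMap A (FractionRing A) a *
                algebraMap A (FractionRing A) (t * a₀) := by rw [hxb]
            _ = algebraMap A (FractionRing A) (t * ((b : A) * (s : A))) := by
                rw [← map_mul]; exact congrArg _ (by linear_combination ht)
            _ = algebraMap A (FractionRing A) (t * (s : A)) *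
                algebraMap A (FractionRing A) (b : A) := by
                rw [← map_mul]; exact congrArg _ (by ring)
        exact mul_right_cancel₀ hbne h3
      rw [← h2, ← mul_assoc, inv_mul_cancel₀ hx, one_mul]
  · -- algebraMap b * c = algebraMap a : then x ∈ locSet
    obtain ⟨t, htP, ht⟩ := key (b : A) a hc
    left
    refine ⟨t * a₀, t * (s : A), fun h => ?_, ?_⟩
    · rcases hPp.mem_or_mem h with h | h
      · exact htP h
      · exact s.2 h
    · have h3 : x * algebraMap A (FractionRing A) (t * (s : A)) *
          algebraMap A (FractionRing A) (b : A) =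
          algebraMap A (FractionRing A) (t * a₀) * algebraMap A (FractionRing A) (b : A) := by
        calc x * algebraMap A (FractionRing A) (t * (s : A)) *
              algebraMap A (FractionRing A) (b : A)
            = (x * algebraMap A (FractionRing A) (b : A)) *
              algebraMap A (FractionRing A) (t * (s : A)) := by ring
          _ = algebraMap A (FractionRing A) a *
              algebraMap A (FractionRing A) (t * (s : A)) := by rw [hxb]
          _ = algebraMap A (FractionRing A) (t * ((b : A) * a₀)) := by
              rw [← map_mul]; exact congrArg _ (by linear_combination -ht)
          _ = algebraMap A (FractionRing A) (t * a₀) *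
              algebraMap A (FractionRing A) (b : A) := by
              rw [← map_mul]; exact congrArg _ (by ring)
      exact mul_right_cancel₀ hbne h3

/-- If `A` is essential, `P` a valued prime and `Q` a prime of the overring `B`
lying over `P`, then `A_P = B_Q` (as subrings of the quotient field). -/
theorem essential_localization_eq
    (A : Type*) [CommRing A] [IsDomain A] (hA : IsEssential A)
    (P : Ideal A) (hP : ValuedPrime A P)
    (B : Subalgebra A (FractionRing A)) (Q : Ideal B) (hQ : Q.IsPrime)
    (hlie : Q.comap (algebraMap A B) = P) :
    locSet A (FractionRing A) P =
      {x : FractionRing A | ∃ b s : B, s ∉ Q ∧ x * (s : FractionRing A) = (b : FractionRing A)} := by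
  classical
  obtain ⟨hPp, hVR⟩ := hP
  haveI := hVR
  have hcoe : ∀ a : A, ((algebraMap A B a : B) : FractionRing A) =
      algebraMap A (FractionRing A) a := fun a =>
    (IsScalarTower.algebraMap_apply A B (FractionRing A) a).symm
  have hmemQ : ∀ a : A, algebraMap A B a ∈ Q ↔ a ∈ P := by
    intro a
    rw [← hlie]
    exact Iff.rfl
  ext x
  constructor
  · rintro ⟨a, s, hs, hxs⟩
    exact ⟨algebraMap A B a, algebraMap A B s, fun h => hs ((hmemQ s).mp h), by
      rw [hcoe, hcoe]; exact hxs⟩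
  · rintro ⟨b, s', hs', hxE⟩
    by_cases hx : x = 0
    · exact ⟨0, 1, fun h => hPp.ne_top (Ideal.eq_top_of_isUnit_mem P h isUnit_one), by
        simp [hx]⟩
    by_contra hmem
    rcases loc_dichotomy A P hPp x hx with h | h
    · exact hmem h
    obtain ⟨a, s, hs, hinv⟩ := h
    have hxa : x * algebraMap A (FractionRing A) a = algebraMap A (FractionRing A) s := by
      rw [← hinv, ← mul_assoc, mul_inv_cancel₀ hx, one_mul]
    have haP : a ∈ P := by
      by_contra haP
      exact hmem ⟨s, a, haP, hxa⟩
    have hBeq : b * algebraMap A B a = s' * algebraMap A B s := by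
      have hKeq : ((b * algebraMap A B a : B) : FractionRing A) =
          ((s' * algebraMap A B s : B) : FractionRing A) := by
        push_cast
        rw [← hxE, mul_comm x ((s' : FractionRing A)), mul_assoc, hxa]
      exact Subtype.coe_injective hKeq
    have hQmul : s' * algebraMap A B s ∈ Q := hBeq ▸ Ideal.mul_mem_left Q b ((hmemQ a).mpr haP)
    rcases hQ.mem_or_mem hQmul with h | h
    · exact hs' h
    · exact hs ((hmemQ s).mp h)
end

section
/- Every P-domain is perinormal: if A is a domain such that A_P is a valuation domain for every prime P minimal over an ideal of the form (a :_A b) with a, b ∈ A, then every going down overring of A is a flat A-module. -/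
open scoped nonZeroDivisors

lemma val_dvd_aux {A : Type*} [CommRing A] [IsDomain A] (P : Ideal A) [P.IsPrime]
    (h : ValuationRing (Localization.AtPrime P)) (a b : A) :
    (∃ r s : A, s ∉ P ∧ a * s = b * r) ∨ (∃ r s : A, s ∉ P ∧ b * s = a * r) := by
  set L := Localization.AtPrime P
  obtain ⟨c, hc | hc⟩ := ValuationRing.cond (algebraMap A L a) (algebraMap A L b)
  · obtain ⟨⟨r, s⟩, hrs⟩ := IsLocalization.surj (P.primeCompl) c
    have : algebraMap A L (b * s) = algebraMap A L (a * r) := by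
      rw [map_mul, map_mul, ← hc, mul_assoc, hrs]
    obtain ⟨u, hu⟩ := (IsLocalization.eq_iff_exists (P.primeCompl) L).mp this
    right
    exact ⟨r * u, s * u, (s * u).2, by ring_nf at hu ⊢; linear_combination hu⟩
  · obtain ⟨⟨r, s⟩, hrs⟩ := IsLocalization.surj (P.primeCompl) c
    have : algebraMap A L (a * s) = algebraMap A L (b * r) := by
      rw [map_mul, map_mul, ← hc, mul_assoc, hrs]
    obtain ⟨u, hu⟩ := (IsLocalization.eq_iff_exists (P.primeCompl) L).mp this
    left
    exact ⟨r * u, s * u, (s * u).2, by ring_nf at hu ⊢; linear_combination hu⟩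

/-- Key lemma: for a P-domain `A`, a going down overring `B`, and a prime `Q` of `B`,
every element of `B` lies in `A` localized at `Q ∩ A`. -/
lemma key_mem_loc {A : Type*} [CommRing A] [IsDomain A] (hA : IsPDomain A)
    {B : Subalgebra A (FractionRing A)} (hB : GoingDownOverring A B)
    (Q : Ideal B) (hQ : Q.IsPrime) (x : FractionRing A) (hx : x ∈ B) :
    ∃ t c : A, t ∉ Q.comap (algebraMap A B) ∧
      x * algebraMap A (FractionRing A) t = algebraMap A (FractionRing A) c := by
  set P : Ideal A := Q.comap (algebraMap A B) with hPdef
  haveI hP : P.IsPrime := Ideal.IsPrime.comap _ (hK := hQ)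
  have hinj : Function.Injective (algebraMap A (FractionRing A)) := IsFractionRing.injective A (FractionRing A)
  obtain ⟨⟨a, s₀⟩, hxs⟩ := IsLocalization.surj A⁰ x
  simp only at hxs
  set J : Ideal A := (Ideal.span {(s₀ : A)}).colon (Ideal.span {a}) with hJdef
  have hs₀ : algebraMap A (FractionRing A) (s₀ : A) ≠ 0 := by
    simpa using IsFractionRing.to_map_ne_zero_of_mem_nonZeroDivisors s₀.2
  by_cases hJP : J ≤ P
  · exfalso
    obtain ⟨P', hP'min, hP'le⟩ := Ideal.exists_minimalPrimes_le hJP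
    obtain ⟨hP'prime, hval⟩ := hA P' ⟨(s₀ : A), a, hP'min⟩
    -- x is not in A_{P'}
    have hnotloc : ∀ t c : A, t ∉ P' →
        x * algebraMap A (FractionRing A) t ≠ algebraMap A (FractionRing A) c := by
      intro t c ht heq
      apply ht
      have : t * a ∈ Ideal.span {(s₀ : A)} := by
        rw [Ideal.mem_span_singleton']
        refine ⟨c, hinj ?_⟩
        have : x * algebraMap A (FractionRing A) (s₀ : A) * algebraMap A (FractionRing A) t
            = algebraMap A (FractionRing A) c * algebraMap A (FractionRing A) (s₀ : A) := by
          rw [mul_right_comm, heq]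
        rw [hxs] at this
        push_cast [map_mul] at this ⊢
        linear_combination -this
      exact hP'min.1.2 (Ideal.mem_colon_span_singleton.mpr this)
    have ha0 : a ≠ 0 := by
      intro h
      apply hP'prime.ne_top
      rw [Ideal.eq_top_iff_one]
      refine hP'min.1.2 (Ideal.mem_colon_span_singleton.mpr ?_)
      simp [h]
    haveI := hP'prime
    obtain ⟨r, s, hs, heq⟩ | ⟨r, s, hs, heq⟩ := val_dvd_aux P' hval a (s₀ : A)
    · -- a * s = s₀ * r, so x * s = r
      refine hnotloc s r hs ?_
      have h1 : x * algebraMap A (FractionRing A) (s₀ : A) * algebraMap A (FractionRing A) s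
          = algebraMap A (FractionRing A) (s₀ : A) * algebraMap A (FractionRing A) r := by
        rw [hxs, ← map_mul, ← map_mul, heq]
      field_simp at h1
      exact h1
    · -- s₀ * s = a * r, so  algebraMap s = x * algebraMap r
      have ha0' : algebraMap A (FractionRing A) a ≠ 0 := by
        simpa using fun h => ha0 (hinj (by simpa using h))
      have h1 : algebraMap A (FractionRing A) s = x * algebraMap A (FractionRing A) r := by
        have h2 : x * (algebraMap A (FractionRing A) (s₀ : A) * algebraMap A (FractionRing A) s)
            = x * (algebraMap A (FractionRing A) a * algebraMap A (FractionRing A) r) := by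
          rw [← map_mul, ← map_mul, heq]
        rw [← mul_assoc, hxs] at h2
        apply mul_left_cancel₀ ha0'
        rw [h2]; ring
      have hrP' : r ∈ P' := by
        by_contra hr
        exact hnotloc r s hr h1.symm
      obtain ⟨Q', hQ'prime, hQ'le, hQ'comap⟩ :=
        hB P' P hP'prime hP hP'le Q hQ rfl
      have hxB : (⟨x, hx⟩ : B) * algebraMap A B r = algebraMap A B s := by
        apply Subtype.ext
        push_cast
        rw [← h1]
      have : algebraMap A B s ∈ Q' := by
        rw [← hxB]
        exact Ideal.mul_mem_left _ _ (by rw [← hQ'comap] at hrP'; exact hrP')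
      rw [← hQ'comap] at hs
      exact hs this
  · rw [SetLike.not_le_iff_exists] at hJP
    obtain ⟨t, htJ, htP⟩ := hJP
    obtain ⟨u, hu⟩ := Ideal.mem_span_singleton'.mp (Ideal.mem_colon_span_singleton.mp htJ)
    refine ⟨t, u, htP, ?_⟩
    apply mul_left_cancel₀ hs₀
    rw [show algebraMap A (FractionRing A) (s₀:A) * (x * algebraMap A (FractionRing A) t)
        = (x * algebraMap A (FractionRing A) (s₀:A)) * algebraMap A (FractionRing A) t by ring, hxs,
      ← map_mul, ← map_mul]
    congr 1
    linear_combination -hu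

set_option maxHeartbeats 1600000 in
set_option synthInstance.maxHeartbeats 400000 in
/-- Every P-domain is perinormal. -/
theorem pdomain_perinormal (A : Type*) [CommRing A] [IsDomain A]
    (hA : IsPDomain A) : Perinormal A := by
  intro B hB
  have hinj : Function.Injective (algebraMap A (FractionRing A)) :=
    IsFractionRing.injective A (FractionRing A)
  rw [Module.Flat.iff_forall_isTrivialRelation]
  intro ι f x hfx
  classical
  set S : Set B := {b : B | ∃ s : A, b = algebraMap A B s ∧ ∀ i,
      (x i : FractionRing A) * algebraMap A (FractionRing A) s ∈
        Set.range (algebraMap A (FractionRing A))} with hSdef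
  have hspan : (1 : B) ∈ Ideal.span S := by
    by_contra h1
    have h : Ideal.span S ≠ ⊤ := fun ht => h1 (ht ▸ Submodule.mem_top)
    obtain ⟨Q, hQmax, hQle⟩ := Ideal.exists_le_maximal _ h
    choose t c ht hc using fun i => key_mem_loc hA hB Q hQmax.isPrime (x i) (x i).2
    haveI : (Q.comap (algebraMap A B)).IsPrime := Ideal.IsPrime.comap _ (hK := hQmax.isPrime)
    have hsS : algebraMap A B (∏ i, t i) ∈ S := by
      refine ⟨∏ i, t i, rfl, fun i => ?_⟩
      refine ⟨c i * ∏ j ∈ Finset.univ.erase i, t j, ?_⟩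
      rw [map_mul, map_prod, ← Finset.mul_prod_erase Finset.univ t (Finset.mem_univ i),
        map_mul, map_prod]
      rw [← hc i]
      ring
    have h1 : (∏ i, t i) ∈ Q.comap (algebraMap A B) := hQle (Ideal.subset_span hsS)
    rw [Ideal.IsPrime.prod_mem_iff] at h1
    obtain ⟨i, _, hi⟩ := h1
    exact ht i hi
  obtain ⟨co, hsupp, hsum⟩ := Submodule.mem_span_set.mp hspan
  have hmem : ∀ z : {z : B // z ∈ co.support}, (z : B) ∈ S := fun z => hsupp z.2
  simp only [hSdef, Set.mem_setOf_eq] at hmem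
  choose sz hsz hcz using hmem
  choose cz hczz using hcz
  have h1 : ∑ z : {z : B // z ∈ co.support}, co z * (z : B) = 1 := by
    rw [Finset.sum_coe_sort co.support (fun z => co z * z), ← hsum, Finsupp.sum]
    refine Finset.sum_congr rfl fun z _ => (smul_eq_mul _ _).symm
  have hone : ∑ z : {z : B // z ∈ co.support},
      ((co z : B) : FractionRing A) * algebraMap A (FractionRing A) (sz z) = 1 := by
    have h2 := congrArg B.val h1
    rw [map_sum, map_one] at h2
    rw [← h2]
    refine Finset.sum_congr rfl fun z _ => ?_
    rw [map_mul]
    congr 1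
    rw [hsz z]
    rfl
  suffices hsuff : ∃ (a : Fin ι → {z : B // z ∈ co.support} → A) (y : {z : B // z ∈ co.support} → B),
      (∀ i, x i = ∑ j, a i j • y j) ∧ ∀ j, ∑ i, f i * a i j = 0 by
    obtain ⟨a, y, hy1, hy2⟩ := hsuff
    let e := Fintype.equivFin {z : B // z ∈ co.support}
    refine ⟨Fintype.card {z : B // z ∈ co.support}, fun i j => a i (e.symm j), fun j => y (e.symm j),
      fun i => ?_, fun j => hy2 _⟩
    rw [hy1 i]
    exact (e.symm.sum_comp (fun j => a i j • y j)).symm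
  refine ⟨fun i z => cz z i, fun z => co z, ?_, ?_⟩
  · intro i
    apply Subtype.ext
    have hR : ((∑ z : {z : B // z ∈ co.support}, cz z i • co ↑z : B) : FractionRing A)
        = ∑ z : {z : B // z ∈ co.support},
            algebraMap A (FractionRing A) (cz z i) * ((co ↑z : B) : FractionRing A) := by
      show B.val _ = _
      rw [map_sum]
      refine Finset.sum_congr rfl fun z _ => ?_
      rw [map_smul, Algebra.smul_def]
      rfl
    rw [hR]
    calc ((x i : B) : FractionRing A)
        = (x i : FractionRing A) * ∑ z : {z : B // z ∈ co.support},
            ((co z : B) : FractionRing A) * algebraMap A (FractionRing A) (sz z) := by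
          rw [hone, mul_one]
      _ = ∑ z : {z : B // z ∈ co.support}, ((co z : B) : FractionRing A) *
            ((x i : FractionRing A) * algebraMap A (FractionRing A) (sz z)) := by
          rw [Finset.mul_sum]; exact Finset.sum_congr rfl fun z _ => by ring
      _ = _ := by
          refine Finset.sum_congr rfl fun z _ => ?_
          rw [← hczz z i]; ring
  · intro z
    apply hinj
    rw [map_sum, map_zero]
    have hfx' : ∑ i, algebraMap A (FractionRing A) (f i) * (x i : FractionRing A) = 0 := by
      have h2 := congrArg B.val hfx
      rw [map_sum, map_zero] at h2
      rw [← h2]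
      refine Finset.sum_congr rfl fun i _ => ?_
      rw [map_smul, Algebra.smul_def]
      rfl
    calc ∑ i, algebraMap A (FractionRing A) (f i * cz z i)
        = ∑ i, algebraMap A (FractionRing A) (f i) *
            ((x i : FractionRing A) * algebraMap A (FractionRing A) (sz z)) := by
          refine Finset.sum_congr rfl fun i _ => ?_
          rw [map_mul, hczz z i]
      _ = (∑ i, algebraMap A (FractionRing A) (f i) * (x i : FractionRing A)) *
            algebraMap A (FractionRing A) (sz z) := by
          rw [Finset.sum_mul]; exact Finset.sum_congr rfl fun i _ => by ring
      _ = 0 := by rw [hfx', zero_mul]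
end

section
/- Let 𝒟 be a class of integral domains closed under localization at prime ideals. If every domain in 𝒟 has no proper lying over overring, then every domain in 𝒟 is perinormal. -/
open scoped nonZeroDivisors

open scoped TensorProduct

section AuxPsi

variable {R B : Type*} [CommRing R] [CommRing B] [Algebra R B]
  (Bp : Type*) [CommRing Bp] [Algebra B Bp] [Algebra R Bp] [IsScalarTower R B Bp]
  (N : Type*) [AddCommGroup N] [Module R N]

noncomputable def auxPsi : (B ⊗[R] N) →ₗ[B] (Bp ⊗[R] N) :=
  ((TensorProduct.AlgebraTensorModule.cancelBaseChange R B Bp Bp N).restrictScalars B).toLinearMap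
    ∘ₗ (TensorProduct.mk B Bp (B ⊗[R] N) 1)

lemma auxPsi_tmul (b : B) (n : N) :
    auxPsi Bp N (b ⊗ₜ[R] n) = algebraMap B Bp b ⊗ₜ[R] n := by
  show (TensorProduct.AlgebraTensorModule.cancelBaseChange R B Bp Bp N)
      ((1 : Bp) ⊗ₜ[B] (b ⊗ₜ[R] n)) = _
  rw [TensorProduct.AlgebraTensorModule.cancelBaseChange_tmul, Algebra.algebraMap_eq_smul_one]

lemma auxPsi_isLocalizedModule (S : Submonoid B) [IsLocalization S Bp] :
    IsLocalizedModule S (auxPsi (R := R) Bp N) :=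
  haveI h1 : IsLocalizedModule S (TensorProduct.mk B Bp (B ⊗[R] N) 1) :=
    (isLocalizedModule_iff_isBaseChange S Bp _).mpr (TensorProduct.isBaseChange (R := B) (S := Bp) (M := (B ⊗[R] N)))
  IsLocalizedModule.of_linearEquiv S (TensorProduct.mk B Bp (B ⊗[R] N) 1)
    ((TensorProduct.AlgebraTensorModule.cancelBaseChange R B Bp Bp N).restrictScalars B)

lemma auxPsi_comm (I : Ideal R) (x : B ⊗[R] I) :
    auxPsi (R := R) Bp R (LinearMap.lTensor B I.subtype x)
      = LinearMap.lTensor Bp I.subtype (auxPsi Bp I x) := by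
  induction x with
  | zero => simp
  | tmul b i => simp [auxPsi_tmul, LinearMap.lTensor_tmul]
  | add x y hx hy => simp_all [map_add]

theorem auxFlat
    (Bq : ∀ (M : Ideal B) [M.IsMaximal], Type*)
    [∀ (M : Ideal B) [M.IsMaximal], CommRing (Bq M)]
    [∀ (M : Ideal B) [M.IsMaximal], Algebra B (Bq M)]
    [∀ (M : Ideal B) [M.IsMaximal], IsLocalization.AtPrime (Bq M) M]
    [∀ (M : Ideal B) [M.IsMaximal], Algebra R (Bq M)]
    [∀ (M : Ideal B) [M.IsMaximal], IsScalarTower R B (Bq M)]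
    (hflat : ∀ (M : Ideal B) [M.IsMaximal], Module.Flat R (Bq M)) :
    Module.Flat R B := by
  rw [Module.Flat.iff_lTensor_injective']
  intro I x y hxy
  haveI : ∀ (M : Ideal B) [M.IsMaximal], IsLocalizedModule M.primeCompl (auxPsi (R := R) (Bq M) I) :=
    fun M _ => auxPsi_isLocalizedModule (Bq M) I M.primeCompl
  apply Module.eq_of_localization_maximal (Mₚ := fun M _ => (Bq M) ⊗[R] I)
    (f := fun M _ => auxPsi (Bq M) I)
  intro M hM
  have hinj := (Module.Flat.iff_lTensor_injective' (R := R) (M := Bq M)).mp (hflat M) I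
  apply hinj
  rw [← auxPsi_comm, ← auxPsi_comm, hxy]

end AuxPsi

section KeyLemma

variable {R : Type*} [CommRing R] [IsDomain R]

/-- The compositum `R_P · B` inside the fraction field, as a subalgebra over `R_P`. -/
noncomputable def compositum (B : Subalgebra R (FractionRing R)) (P : Ideal R) [P.IsPrime] :
    Subalgebra (Localization.AtPrime P) (FractionRing R) where
  carrier := {x : FractionRing R | ∃ b ∈ B, ∃ s : R, s ∉ P ∧
    x * algebraMap R (FractionRing R) s = b}
  mul_mem' := by
    rintro x y ⟨b, hb, s, hs, hx⟩ ⟨c, hc, t, ht, hy⟩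
    refine ⟨b * c, mul_mem hb hc, s * t, P.primeCompl.mul_mem hs ht, ?_⟩
    rw [map_mul, mul_mul_mul_comm, hx, hy]
  one_mem' := ⟨1, one_mem B, 1, P.primeCompl.one_mem, by simp⟩
  add_mem' := by
    rintro x y ⟨b, hb, s, hs, hx⟩ ⟨c, hc, t, ht, hy⟩
    refine ⟨b * algebraMap R (FractionRing R) t + c * algebraMap R (FractionRing R) s,
      add_mem (mul_mem hb (B.algebraMap_mem t)) (mul_mem hc (B.algebraMap_mem s)),
      s * t, P.primeCompl.mul_mem hs ht, ?_⟩
    rw [map_mul, add_mul,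
      show x * (algebraMap R (FractionRing R) s * algebraMap R (FractionRing R) t)
        = x * algebraMap R (FractionRing R) s * algebraMap R (FractionRing R) t by ring, hx,
      show y * (algebraMap R (FractionRing R) s * algebraMap R (FractionRing R) t)
        = y * algebraMap R (FractionRing R) t * algebraMap R (FractionRing R) s by ring, hy]
  zero_mem' := ⟨0, zero_mem B, 1, P.primeCompl.one_mem, by simp⟩
  algebraMap_mem' := by
    intro r'
    obtain ⟨⟨r, s⟩, rfl⟩ := IsLocalization.mk'_surjective P.primeCompl r'
    refine ⟨algebraMap R (FractionRing R) r, B.algebraMap_mem r, s, s.2, ?_⟩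
    rw [IsScalarTower.algebraMap_apply R (Localization.AtPrime P) (FractionRing R) s,
      ← map_mul, IsLocalization.mk'_spec,
      ← IsScalarTower.algebraMap_apply R (Localization.AtPrime P) (FractionRing R)]

lemma mem_compositum {B : Subalgebra R (FractionRing R)} {P : Ideal R} [P.IsPrime]
    {x : FractionRing R} :
    x ∈ compositum B P ↔ ∃ b ∈ B, ∃ s : R, s ∉ P ∧
      x * algebraMap R (FractionRing R) s = b := Iff.rfl

attribute [-instance] instAlgebraAtPrimeFractionRing in
theorem key_sub (B : Subalgebra R (FractionRing R)) (hGD : GoingDownOverring R B)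
    (M : Ideal B) (hM : M.IsPrime) (P : Ideal R) [hP : P.IsPrime]
    (hPM : M.comap (algebraMap R B) = P)
    (hLO' : ∀ C : Subalgebra (Localization.AtPrime P) (FractionRing (Localization.AtPrime P)),
        LyingOverOverring (Localization.AtPrime P) C → C = ⊥)
    (b : B) :
    ∃ r s : R, s ∉ P ∧ (b : FractionRing R) * algebraMap R (FractionRing R) s
      = algebraMap R (FractionRing R) r := by
  classical
  set K := FractionRing R with hK
  set R' := Localization.AtPrime P with hR'
  haveI : IsDomain R' := IsLocalization.isDomain_of_local_atPrime hP
  haveI : IsFractionRing R' K :=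
    IsFractionRing.isFractionRing_of_isLocalization P.primeCompl _ _
      P.primeCompl_le_nonZeroDivisors
  set C := compositum B P with hCdef
  have hBC : ∀ x : B, (x : K) ∈ C := fun x =>
    ⟨(x : K), x.2, 1, P.primeCompl.one_mem, by simp⟩
  letI : Algebra B C := (RingHom.codRestrict (B.val.toRingHom) C.toSubring hBC).toAlgebra
  have halgBC : ∀ x : B, ((algebraMap B C x : C) : K) = (x : K) := fun _ => rfl
  have halgRC : ∀ r : R, ((algebraMap R' C (algebraMap R R' r) : C) : K)
      = algebraMap R K r := fun r => by
    show (algebraMap R' K (algebraMap R R' r)) = algebraMap R K r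
    rw [← IsScalarTower.algebraMap_apply]
  set SB : Submonoid B := Algebra.algebraMapSubmonoid B P.primeCompl with hSB
  haveI hLocC : IsLocalization SB C := by
    refine ⟨?_, ?_, ?_⟩
    · rintro ⟨_, s, hs, rfl⟩
      refine IsUnit.of_mul_eq_one (algebraMap R' C (IsLocalization.mk' R' (1 : R) ⟨s, hs⟩))
        (Subtype.ext ?_)
      show ((algebraMap R B s : B) : K) * algebraMap R' K (IsLocalization.mk' R' (1 : R) ⟨s, hs⟩) = 1
      have hcou : ((algebraMap R B s : B) : K) = algebraMap R K s := rfl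
      rw [hcou, IsScalarTower.algebraMap_apply R R' K s, ← map_mul, mul_comm,
        IsLocalization.mk'_spec, map_one, map_one]
    · intro z
      obtain ⟨v, hv, s, hs, hz⟩ := mem_compositum.mp z.2
      refine ⟨⟨⟨v, hv⟩, ⟨algebraMap R B s, ⟨s, hs, rfl⟩⟩⟩, Subtype.ext ?_⟩
      show (z : K) * algebraMap R K s = v
      exact hz
    · intro x y h
      have h'' := congrArg (Subtype.val : C → K) h
      have h' : ((x : B) : K) = ((y : B) : K) := h''
      exact ⟨1, by rw [Subtype.ext h']⟩
  haveI : IsScalarTower R R' C := IsScalarTower.of_algebraMap_eq fun r =>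
    Subtype.ext (by rw [halgRC]; rfl)
  have halgRCB : (algebraMap R C) = (algebraMap B C).comp (algebraMap R B) :=
    RingHom.ext fun r => Subtype.ext (by rw [RingHom.comp_apply, halgBC]; rfl)
  let e : K ≃ₐ[R'] FractionRing R' := (FractionRing.algEquiv R' K).symm
  set C' : Subalgebra R' (FractionRing R') := C.map e.toAlgHom with hC'
  have hLOC : LyingOverOverring R' C' := by
    intro q hq
    haveI := hq
    set P' := q.comap (algebraMap R R') with hP'def
    haveI hP' : P'.IsPrime := Ideal.IsPrime.comap _
    have hP'P : P' ≤ P := by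
      have hd := ((IsLocalization.isPrime_iff_isPrime_disjoint P.primeCompl R' q).mp hq).2
      intro a ha
      by_contra hnot
      exact Set.disjoint_left.mp hd hnot ha
    obtain ⟨Q', hQ'p, hQ'le, hQ'c⟩ := hGD P' P hP' hP hP'P M hM hPM
    have hdisj : Disjoint (SB : Set B) (Q' : Set B) := by
      rw [Set.disjoint_left]
      rintro _ ⟨s, hs, rfl⟩ hmem
      refine hs ?_
      have : s ∈ P' := by rw [← hQ'c]; exact hmem
      exact hP'P this
    haveI hQ''p : (Q'.map (algebraMap B C)).IsPrime :=
      IsLocalization.isPrime_of_isPrime_disjoint SB C Q' hQ'p hdisj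
    have hcomap : (Q'.map (algebraMap B C)).comap (algebraMap B C) = Q' :=
      IsLocalization.under_map_of_isPrime_disjoint SB C hQ'p hdisj
    let ρ : C ≃ₐ[R'] C' := AlgEquiv.subalgebraMap e C
    let ρ' : C' →+* C := ρ.symm.toAlgHom.toRingHom
    refine ⟨(Q'.map (algebraMap B C)).comap ρ', Ideal.IsPrime.comap _, ?_⟩
    have hcc : ((Q'.map (algebraMap B C)).comap ρ').comap (algebraMap R' C')
        = (Q'.map (algebraMap B C)).comap (algebraMap R' C) := by
      rw [Ideal.comap_comap]
      congr 1
      exact AlgHom.comp_algebraMap ρ.symm.toAlgHom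
    have hcR : (((Q'.map (algebraMap B C)).comap (algebraMap R' C)).comap
        (algebraMap R R')) = P' := by
      rw [Ideal.comap_comap, ← IsScalarTower.algebraMap_eq R R' C, halgRCB,
        ← Ideal.comap_comap, hcomap, hQ'c]
    have h1 := IsLocalization.map_comap P.primeCompl R' q
    have h2 := IsLocalization.map_comap P.primeCompl R'
      (((Q'.map (algebraMap B C)).comap ρ').comap (algebraMap R' C'))
    unfold Ideal.under at h1 h2
    rw [← h2, hcc, hcR, hP'def, h1]
  have hCbot : C' = ⊥ := hLO' C' hLOC
  have hmem : e (b : K) ∈ C' := ⟨(b : K), hBC b, rfl⟩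
  rw [hCbot, Algebra.mem_bot] at hmem
  obtain ⟨y, hy⟩ := hmem
  have hby : (b : K) = algebraMap R' K y := by
    apply e.injective
    rw [← hy, AlgEquiv.commutes]
  obtain ⟨⟨r, s⟩, rfl⟩ := IsLocalization.mk'_surjective P.primeCompl y
  refine ⟨r, s, s.2, ?_⟩
  rw [hby, IsScalarTower.algebraMap_apply R R' K s, ← map_mul, IsLocalization.mk'_spec,
    ← IsScalarTower.algebraMap_apply]

end KeyLemma

universe u

set_option maxHeartbeats 1000000 in
set_option synthInstance.maxHeartbeats 200000 in
/-- If a class of domains is closed under localization at primes and no member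
has a proper lying over overring, then every member is perinormal. -/
theorem class_no_lying_over_perinormal
    (D : ∀ (R : Type u) [CommRing R] [IsDomain R], Prop)
    (hloc : ∀ (R : Type u) [CommRing R] [IsDomain R], D R →
      ∀ (P : Ideal R) (_ : P.IsPrime), D (Localization.AtPrime P))
    (hLO : ∀ (R : Type u) [CommRing R] [IsDomain R], D R →
      ∀ B : Subalgebra R (FractionRing R), LyingOverOverring R B → B = ⊥)
    (R : Type u) [CommRing R] [IsDomain R] (hR : D R) :
    Perinormal R := by
  intro B hGD
  refine @auxFlat R B _ _ _ (fun M _ => Localization.AtPrime M)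
    (fun M _ => inferInstance) (fun M _ => inferInstance) (fun M _ => inferInstance)
    (fun M _ => ((algebraMap B (Localization.AtPrime M)).comp (algebraMap R B)).toAlgebra)
    ?_ ?_
  · intro M hMmax
    letI : Algebra R (Localization.AtPrime M) :=
      ((algebraMap B (Localization.AtPrime M)).comp (algebraMap R B)).toAlgebra
    exact IsScalarTower.of_algebraMap_eq fun x => rfl
  intro M hMmax
  letI : Algebra R (Localization.AtPrime M) :=
    ((algebraMap B (Localization.AtPrime M)).comp (algebraMap R B)).toAlgebra
  haveI hMp : M.IsPrime := hMmax.isPrime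
  set P : Ideal R := M.comap (algebraMap R B) with hPdef
  haveI hP : P.IsPrime := Ideal.IsPrime.comap _
  have hkeyB : ∀ b : B, ∃ r s : R, s ∉ P ∧ b * algebraMap R B s = algebraMap R B r := by
    intro b
    obtain ⟨r, s, hs, h⟩ := key_sub B hGD M hMp P rfl
      (fun C hC => hLO (Localization.AtPrime P) (hloc R hR P hP) C hC) b
    exact ⟨r, s, hs, Subtype.ext h⟩
  have hRBinj : Function.Injective (algebraMap R B) := fun a b hab =>
    IsFractionRing.injective R (FractionRing R) (congrArg Subtype.val hab)
  haveI : IsLocalization P.primeCompl (Localization.AtPrime M) := by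
    refine ⟨?_, ?_, ?_⟩
    · rintro ⟨s, hs⟩
      have hs' : algebraMap R B s ∈ M.primeCompl := fun hmem => hs (Ideal.mem_comap.mpr hmem)
      exact IsLocalization.map_units (M := M.primeCompl) (Localization.AtPrime M)
        ⟨algebraMap R B s, hs'⟩
    · intro z
      obtain ⟨⟨b, t⟩, hz⟩ := IsLocalization.surj (M := M.primeCompl) z
      obtain ⟨r₁, s₁, hs₁, hb⟩ := hkeyB b
      obtain ⟨r₂, s₂, hs₂, ht⟩ := hkeyB t
      have hr₂ : r₂ ∉ P := by
        intro hmem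
        have hmem' : (t : B) * algebraMap R B s₂ ∈ M := by
          rw [ht]; exact Ideal.mem_comap.mp hmem
        rcases hMp.mem_or_mem hmem' with h | h
        · exact t.2 h
        · exact hs₂ (Ideal.mem_comap.mpr h)
      refine ⟨⟨r₁ * s₂, ⟨s₁ * r₂, P.primeCompl.mul_mem hs₁ hr₂⟩⟩, ?_⟩
      show z * algebraMap B (Localization.AtPrime M) (algebraMap R B (s₁ * r₂))
        = algebraMap B (Localization.AtPrime M) (algebraMap R B (r₁ * s₂))
      rw [map_mul, ← ht]
      rw [map_mul, map_mul, map_mul]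
      rw [show z * ((algebraMap B (Localization.AtPrime M)) (algebraMap R B s₁) *
          ((algebraMap B (Localization.AtPrime M)) t *
            (algebraMap B (Localization.AtPrime M)) (algebraMap R B s₂)))
        = (z * (algebraMap B (Localization.AtPrime M)) t) *
          ((algebraMap B (Localization.AtPrime M)) (algebraMap R B s₁) *
            (algebraMap B (Localization.AtPrime M)) (algebraMap R B s₂)) by ring, hz,
        ← map_mul, ← map_mul, ← map_mul]
      congr 1
      rw [map_mul, ← mul_assoc, hb]
    · intro x y h
      have h' : algebraMap R B x = algebraMap R B y := by
        have hinj : Function.Injective (algebraMap B (Localization.AtPrime M)) :=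
          IsLocalization.injective (Localization.AtPrime M) M.primeCompl_le_nonZeroDivisors
        exact hinj h
      exact ⟨1, by rw [hRBinj h']⟩
  exact IsLocalization.flat (Localization.AtPrime M) P.primeCompl
end

section
/- Every Prüfer v-multiplication domain (PVMD) is perinormal and has no proper lying over overrings. -/
open scoped nonZeroDivisors

section PVMDProof

open FractionalIdeal

open scoped Pointwise

variable {A : Type*} [CommRing A] [IsDomain A]

/-- Totality of divisibility at the prime `P`, stated elementwise. -/
def DivTot (A : Type*) [CommRing A] (P : Ideal A) : Prop :=
  ∀ u v : A, ∃ s c : A, s ∉ P ∧ (s * u = c * v ∨ s * v = c * u)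

theorem minp {C P : Ideal A} (hP : P ∈ C.minimalPrimes) {h : A} (hh : h ∈ P) :
    ∃ (n : ℕ) (s : A), s ∉ P ∧ s * h ^ n ∈ C := by
  by_contra hcon
  push_neg at hcon
  have hPp : P.IsPrime := hP.1.1
  have hone : (1 : A) ∉ P := (Ideal.ne_top_iff_one P).mp hPp.ne_top
  set T : Submonoid A :=
    { carrier := {a | ∃ s, s ∉ P ∧ ∃ n : ℕ, a = s * h ^ n}
      one_mem' := ⟨1, hone, 0, by ring⟩
      mul_mem' := by
        rintro a b ⟨s, hs, n, rfl⟩ ⟨s', hs', n', rfl⟩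
        exact ⟨s * s', fun hm => ((hPp.mem_or_mem hm).elim hs hs'), n + n', by ring⟩ } with hT
  have hdisj : Disjoint (C : Set A) (T : Set A) := by
    rw [Set.disjoint_left]
    rintro a haC ⟨s, hs, n, rfl⟩
    exact hcon n s hs haC
  obtain ⟨p, hpp, hCp, hpd⟩ := Ideal.exists_le_prime_disjoint C T hdisj
  have hpP : p ≤ P := by
    intro a hap
    by_contra haP
    exact (Set.disjoint_left.mp hpd) hap ⟨a, haP, 0, by ring⟩
  have hPle : P ≤ p := hP.2 ⟨hpp, hCp⟩ hpP
  exact (Set.disjoint_left.mp hpd) (hPle hh) ⟨1, hone, 1, by ring⟩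

theorem sat {C P H : Ideal A} (hP : P ∈ C.minimalPrimes) (hH : H.FG) (hHP : H ≤ P) :
    ∃ t : A, t ∉ C ∧ ∀ h ∈ H, t * h ∈ C := by
  classical
  have hPp : P.IsPrime := hP.1.1
  have hone : (1 : A) ∉ P := (Ideal.ne_top_iff_one P).mp hPp.ne_top
  set C' : Ideal A :=
    { carrier := {c | ∃ s, s ∉ P ∧ s * c ∈ C}
      zero_mem' := ⟨1, hone, by simpa using C.zero_mem⟩
      add_mem' := by
        rintro a b ⟨s, hs, hsc⟩ ⟨s', hs', hsc'⟩
        refine ⟨s * s', fun hm => (hPp.mem_or_mem hm).elim hs hs', ?_⟩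
        have heq : s * s' * (a + b) = s' * (s * a) + s * (s' * b) := by ring
        rw [heq]
        exact C.add_mem (C.mul_mem_left _ hsc) (C.mul_mem_left _ hsc')
      smul_mem' := by
        rintro a b ⟨s, hs, hsc⟩
        refine ⟨s, hs, ?_⟩
        have heq : s * (a • b) = a * (s * b) := by simp [smul_eq_mul]; ring
        rw [heq]
        exact C.mul_mem_left _ hsc } with hC'
  have hrad : H ≤ C'.radical := by
    intro h hh
    rw [Ideal.mem_radical_iff]
    obtain ⟨n, s, hs, hsc⟩ := minp hP (hHP hh)
    exact ⟨n, s, hs, hsc⟩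
  obtain ⟨M, hM⟩ := Ideal.exists_pow_le_of_le_radical_of_fg hrad hH
  have hex : ∃ n : ℕ, ∃ s, s ∉ P ∧ ∀ w ∈ H ^ n, s * w ∈ C := by
    obtain ⟨G, hG⟩ := Submodule.FG.pow hH M
    have hGC' : ∀ g ∈ G, ∃ s, s ∉ P ∧ s * g ∈ C := by
      intro g hg
      exact hM (hG ▸ Ideal.subset_span hg)
    choose sf hsf1 hsf2 using hGC'
    refine ⟨M, ∏ g ∈ G.attach, sf g g.2, ?_, ?_⟩
    · intro hmem
      obtain ⟨g, _, hg⟩ := Ideal.IsPrime.prod_mem_iff.mp hmem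
      exact hsf1 g g.2 hg
    · intro w hw
      set s : A := ∏ g ∈ G.attach, sf g g.2 with hs
      have : w ∈ C.colon (Ideal.span {s}) := by
        rw [← hG] at hw
        refine Ideal.span_le.mpr ?_ hw
        intro g hg
        rw [SetLike.mem_coe, Ideal.mem_colon_span_singleton]
        have hfac : s = sf g hg * ∏ x ∈ G.attach.erase ⟨g, hg⟩, sf x x.2 := by
          rw [hs, ← Finset.mul_prod_erase G.attach _ (Finset.mem_attach G ⟨g, hg⟩)]
        rw [hfac]
        have : g * (sf g hg * ∏ x ∈ G.attach.erase ⟨g, hg⟩, sf x x.2)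
            = (∏ x ∈ G.attach.erase ⟨g, hg⟩, sf x x.2) * (sf g hg * g) := by ring
        rw [this]
        exact C.mul_mem_left _ (hsf2 g hg)
      rw [Ideal.mem_colon_span_singleton] at this
      rw [mul_comm]
      exact this
  set n := Nat.find hex with hn
  obtain ⟨s, hsP, hsw⟩ := Nat.find_spec hex
  have hn0 : n ≠ 0 := by
    intro h0
    rw [← hn, h0] at hsw
    have h1 : s * 1 ∈ C := hsw 1 (by simp [Ideal.one_eq_top])
    rw [mul_one] at h1
    exact hsP (hP.1.2 h1)
  have hnotprev : ¬ ∃ s, s ∉ P ∧ ∀ w ∈ H ^ (n - 1), s * w ∈ C :=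
    Nat.find_min hex (Nat.pred_lt hn0)
  push_neg at hnotprev
  obtain ⟨w₀, hw₀, hw₀C⟩ := hnotprev s hsP
  refine ⟨s * w₀, hw₀C, fun h hh => ?_⟩
  have heq : s * w₀ * h = s * (w₀ * h) := by ring
  rw [heq]
  apply hsw
  have hpowe : H ^ n = H ^ (n - 1) * H := by
    rw [← pow_succ]
    congr 1
    omega
  rw [hpowe]
  exact Ideal.mul_mem_mul hw₀ hh


theorem divTot_of_minimal (hA : IsPVMD A) {P : Ideal A} {γ δ : A}
    (hP : P ∈ ((Ideal.span {γ} : Ideal A).colon (Ideal.span {δ})).minimalPrimes) :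
    DivTot A P := by
  classical
  have hPp : P.IsPrime := hP.1.1
  have hone : (1 : A) ∉ P := (Ideal.ne_top_iff_one P).mp hPp.ne_top
  intro u v
  by_cases hu : u = 0
  · exact ⟨1, 0, hone, Or.inl (by simp [hu])⟩
  by_cases hv : v = 0
  · exact ⟨1, 0, hone, Or.inr (by simp [hv])⟩
  by_cases hPbot : P = ⊥
  · refine ⟨v, u, ?_, Or.inl (mul_comm v u)⟩
    rw [hPbot]
    simpa using hv
  set C : Ideal A := (Ideal.span {γ}).colon (Ideal.span {δ}) with hCdef
  have hCP : C ≤ P := hP.1.2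
  have hδ : δ ≠ 0 := by
    rintro rfl
    have htop : C = ⊤ := by
      rw [eq_top_iff]
      intro a _
      rw [hCdef, Ideal.mem_colon_span_singleton, mul_zero]
      exact (Ideal.span {γ}).zero_mem
    rw [htop] at hCP
    exact hPp.ne_top (top_le_iff.mp hCP)
  have hγ : γ ≠ 0 := by
    rintro rfl
    have hCbot : C = ⊥ := by
      rw [eq_bot_iff]
      intro a ha
      rw [hCdef, Ideal.mem_colon_span_singleton] at ha
      rw [Ideal.span_singleton_eq_bot.mpr rfl, Submodule.mem_bot] at ha
      rcases mul_eq_zero.mp ha with h | h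
      · simp [h]
      · exact absurd h hδ
    have hPle : P ≤ ⊥ := hP.2 ⟨Ideal.bot_prime, by rw [hCbot]⟩ bot_le
    exact hPbot (le_bot_iff.mp hPle)
  set I : Ideal A := Ideal.span {u, v} with hIdef
  have huI : u ∈ I := Ideal.subset_span (by simp)
  have hvI : v ∈ I := Ideal.subset_span (by simp)
  have hIbot : I ≠ ⊥ := fun h => hu ((Submodule.mem_bot A).mp (h ▸ huI))
  obtain ⟨J, hJbot, hJfg, x, hx⟩ := hA I hIbot (Submodule.fg_span (Set.toFinite _))
  obtain ⟨T, hT⟩ := hJfg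
  set f : A →+* FractionRing A := algebraMap A (FractionRing A) with hf
  have hfinj : Function.Injective f := IsFractionRing.injective A (FractionRing A)
  set G : FractionalIdeal A⁰ (FractionRing A) := ↑(I * J) with hGdef
  have hxG : 1 / (1 / G) = spanSingleton A⁰ x := by rw [hGdef, coeIdeal_mul]; exact hx
  have hIJbot : I * J ≠ ⊥ := by
    rw [Ne, Ideal.mul_eq_bot]
    push_neg
    exact ⟨hIbot, hJbot⟩
  have hG0 : G ≠ 0 := by rw [hGdef]; exact coeIdeal_ne_zero.mpr hIJbot
  have h1mem : (1 : FractionRing A) ∈ 1 / G := by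
    rw [mem_div_iff_of_ne_zero hG0]
    intro g hg
    rw [one_mul]
    exact coeIdeal_le_one hg
  have hd0 : (1 / G : FractionalIdeal A⁰ (FractionRing A)) ≠ 0 := by
    intro h
    rw [h, mem_zero_iff] at h1mem
    exact one_ne_zero h1mem
  have hGsub : ∀ g ∈ G, g ∈ spanSingleton A⁰ x := by
    intro g hg
    rw [← hxG, mem_div_iff_of_ne_zero hd0]
    intro y hy
    rw [mem_div_iff_of_ne_zero hG0] at hy
    rw [mul_comm]
    exact hy g hg
  have hxdual : ∀ m ∈ 1 / G, x * m ∈ (1 : FractionalIdeal A⁰ (FractionRing A)) := by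
    have hxmem : x ∈ 1 / (1 / G) := by rw [hxG]; exact mem_spanSingleton_self _ _
    rw [mem_div_iff_of_ne_zero hd0] at hxmem
    exact hxmem
  obtain ⟨j₀, hj₀J, hj₀⟩ : ∃ j ∈ J, j ≠ 0 := by
    by_contra hcon
    push_neg at hcon
    exact hJbot ((Submodule.eq_bot_iff _).mpr hcon)
  have hx0 : x ≠ 0 := by
    rintro rfl
    have hmem : f (u * j₀) ∈ spanSingleton A⁰ (0 : FractionRing A) :=
      hGsub _ ((mem_coeIdeal _).mpr ⟨u * j₀, Ideal.mul_mem_mul huI hj₀J, rfl⟩)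
    rw [spanSingleton_zero, mem_zero_iff] at hmem
    exact mul_ne_zero hu hj₀ (hfinj (by simpa using hmem))
  have hF1 : ∀ w : A, ∃ r : A, w ∈ I * J → f w = x * f r := by
    intro w
    by_cases hw : w ∈ I * J
    · obtain ⟨z, hz⟩ := (mem_spanSingleton _).mp (hGsub (f w) ((mem_coeIdeal _).mpr ⟨w, hw, rfl⟩))
      exact ⟨z, fun _ => by rw [← hz, Algebra.smul_def, mul_comm]⟩
    · exact ⟨0, fun h => absurd h hw⟩
  choose ρ hρ using hF1
  have hTJ : ∀ j ∈ T, j ∈ J := by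
    intro j hj
    rw [← hT]
    exact Ideal.subset_span hj
  set gens : Finset A := T.image (fun j => ρ (u * j)) ∪ T.image (fun j => ρ (v * j)) with hgens
  by_cases hHP : Ideal.span (↑gens : Set A) ≤ P
  · exfalso
    obtain ⟨t, htC, htH⟩ := sat hP ⟨gens, rfl⟩ hHP
    have hfγ : f γ ≠ 0 := fun h => hγ (hfinj (by simpa using h))
    set k₀ : FractionRing A := f (t * δ) * (f γ)⁻¹ with hk₀
    have hstep : ∀ w ∈ ({u, v} : Set A) * (↑T : Set A),
        ∃ e : A, (x⁻¹ * k₀) * f w = f e := by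
      rintro w hw
      rw [Set.mem_mul] at hw
      obtain ⟨w₁, hw₁, j, hj, rfl⟩ := hw
      have hw₁I : w₁ ∈ I := Ideal.subset_span hw₁
      have hwIJ : w₁ * j ∈ I * J := Ideal.mul_mem_mul hw₁I (hTJ j hj)
      have heq := hρ (w₁ * j) hwIJ
      have hρH : ρ (w₁ * j) ∈ Ideal.span (↑gens : Set A) := by
        apply Ideal.subset_span
        rw [hgens]
        rcases hw₁ with rfl | rfl
        · exact Finset.mem_coe.mpr (Finset.mem_union_left _ (Finset.mem_image_of_mem _ hj))
        · 
          exact Finset.mem_coe.mpr (Finset.mem_union_right _ (Finset.mem_image_of_mem _ hj))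
      have htρ := htH _ hρH
      rw [hCdef, Ideal.mem_colon_span_singleton] at htρ
      obtain ⟨e, he⟩ := Ideal.mem_span_singleton'.mp htρ
      refine ⟨e, ?_⟩
      rw [heq, hk₀]
      have : x⁻¹ * (f (t * δ) * (f γ)⁻¹) * (x * f (ρ (w₁ * j)))
          = (f (t * δ) * f (ρ (w₁ * j))) * (f γ)⁻¹ * (x⁻¹ * x) := by ring
      rw [this, inv_mul_cancel₀ hx0, mul_one, ← _root_.map_mul]
      have harr : t * δ * ρ (w₁ * j) = γ * e := by
        linear_combination -he
      rw [harr, _root_.map_mul]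
      field_simp
    have hkey : ∀ w ∈ I * J, ∃ e : A, (x⁻¹ * k₀) * f w = f e := by
      intro w hw
      have hIJspan : I * J = Ideal.span (({u, v} : Set A) * (↑T : Set A)) := by
        rw [hIdef, ← hT, Ideal.span_mul_span']
      rw [hIJspan] at hw
      obtain ⟨nn, cc, gg, hsum⟩ := Submodule.mem_span_set'.mp hw
      choose e he using fun i => hstep (gg i) (gg i).2
      refine ⟨∑ i, cc i * e i, ?_⟩
      rw [← hsum, _root_.map_sum, Finset.mul_sum, _root_.map_sum]
      apply Finset.sum_congr rfl
      intro i _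
      have hcoe : f (cc i • (gg i : A)) = f (cc i) * f (gg i : A) := by
        rw [smul_eq_mul, _root_.map_mul]
      rw [hcoe, _root_.map_mul]
      calc (x⁻¹ * k₀) * (f (cc i) * f (gg i : A))
          = f (cc i) * ((x⁻¹ * k₀) * f (gg i : A)) := by ring
        _ = f (cc i) * f (e i) := by rw [he i]
    have hm : x⁻¹ * k₀ ∈ 1 / G := by
      rw [mem_div_iff_of_ne_zero hG0]
      intro g hg
      obtain ⟨w, hwIJ, rfl⟩ := (mem_coeIdeal _).mp hg
      obtain ⟨e, he⟩ := hkey w hwIJ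
      rw [he]
      exact (mem_one_iff _).mpr ⟨e, rfl⟩
    have hk₁ : k₀ ∈ (1 : FractionalIdeal A⁰ (FractionRing A)) := by
      have hd := hxdual _ hm
      rwa [← mul_assoc, mul_inv_cancel₀ hx0, one_mul] at hd
    obtain ⟨e₀, he₀⟩ := (mem_one_iff _).mp hk₁
    apply htC
    rw [hCdef, Ideal.mem_colon_span_singleton, Ideal.mem_span_singleton']
    refine ⟨e₀, ?_⟩
    apply hfinj
    rw [_root_.map_mul]
    have : f e₀ * f γ = k₀ * f γ := by rw [he₀]
    rw [hk₀] at this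
    rw [this]
    field_simp
  · rw [Ideal.span_le] at hHP
    obtain ⟨r, hrg, hrP⟩ := Set.not_subset.mp hHP
    rw [hgens] at hrg
    rw [Finset.coe_union, Set.mem_union] at hrg
    have main : ∀ j ∈ T, ∀ w₁ w₂ : A, w₁ ∈ I → w₂ ∈ I →
        ρ (w₁ * j) * w₂ = ρ (w₂ * j) * w₁ := by
      intro j hj w₁ w₂ hw₁ hw₂
      have h1 := hρ (w₁ * j) (Ideal.mul_mem_mul hw₁ (hTJ j hj))
      have h2 := hρ (w₂ * j) (Ideal.mul_mem_mul hw₂ (hTJ j hj))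
      apply hfinj
      have hcross : f w₂ * f (w₁ * j) = f w₁ * f (w₂ * j) := by
        rw [← _root_.map_mul, ← _root_.map_mul]
        congr 1
        ring
      rw [h1, h2] at hcross
      have hcross2 : x * (f (ρ (w₁ * j)) * f w₂) = x * (f (ρ (w₂ * j)) * f w₁) := by
        linear_combination hcross
      have := mul_left_cancel₀ hx0 hcross2
      rw [_root_.map_mul, _root_.map_mul]
      linear_combination this
    rcases hrg with hrg | hrg
    · rw [Finset.coe_image, Set.mem_image] at hrg
      obtain ⟨j, hj, rfl⟩ := hrg
      exact ⟨ρ (u * j), ρ (v * j), hrP, Or.inr (main j (Finset.mem_coe.mp hj) u v huI hvI)⟩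
    · rw [Finset.coe_image, Set.mem_image] at hrg
      obtain ⟨j, hj, rfl⟩ := hrg
      exact ⟨ρ (v * j), ρ (u * j), hrP, Or.inl (main j (Finset.mem_coe.mp hj) v u hvI huI)⟩

theorem overring_loc {B : Subalgebra A (FractionRing A)} {z : FractionRing A} (hzB : z ∈ B)
    {P : Ideal A} (hdiv : DivTot A P)
    {Q : Ideal B} (hQ : Q.IsPrime) (hQP : Q.comap (algebraMap A B) = P) :
    ∃ a s : A, s ∉ P ∧ z * algebraMap A (FractionRing A) s = algebraMap A (FractionRing A) a := by
  obtain ⟨⟨α, β⟩, hαβ⟩ := IsLocalization.surj A⁰ z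
  set f : A →+* FractionRing A := algebraMap A (FractionRing A) with hf
  have hfβ : f ↑β ≠ 0 := IsFractionRing.to_map_ne_zero_of_mem_nonZeroDivisors β.2
  obtain ⟨s, c, hs, hsc | hsc⟩ := hdiv α ↑β
  · refine ⟨c, s, hs, mul_right_cancel₀ hfβ ?_⟩
    calc z * f s * f ↑β = (z * f ↑β) * f s := by ring
      _ = f α * f s := by rw [hαβ]
      _ = f (s * α) := by rw [_root_.map_mul]; ring
      _ = f (c * ↑β) := by rw [hsc]
      _ = f c * f ↑β := by rw [_root_.map_mul]
  · have hzc : z * f c = f s := by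
      apply mul_right_cancel₀ hfβ
      calc z * f c * f ↑β = (z * f ↑β) * f c := by ring
        _ = f α * f c := by rw [hαβ]
        _ = f (c * α) := by rw [_root_.map_mul]; ring
        _ = f (s * ↑β) := by rw [← hsc]
        _ = f s * f ↑β := by rw [_root_.map_mul]
    by_cases hc : c ∈ P
    · exfalso
      have hcQ : algebraMap A B c ∈ Q := by
        rw [← hQP] at hc
        exact Ideal.mem_comap.mp hc
      have hzBel : (⟨z, hzB⟩ : B) * algebraMap A B c = algebraMap A B s := by
        apply Subtype.ext
        exact hzc
      have hsQ : algebraMap A B s ∈ Q := hzBel ▸ Q.mul_mem_left _ hcQ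
      apply hs
      rw [← hQP]
      exact Ideal.mem_comap.mpr hsQ
    · exact ⟨s, c, hc, hzc⟩

theorem step_loc (hA : IsPVMD A) (z : FractionRing A) {P₀ : Ideal A} (hP₀ : P₀.IsPrime)
    (hz : ∀ P : Ideal A, P.IsPrime → P ≤ P₀ → DivTot A P →
      ∃ a s : A, s ∉ P ∧ z * algebraMap A (FractionRing A) s = algebraMap A (FractionRing A) a) :
    ∃ a s : A, s ∉ P₀ ∧ z * algebraMap A (FractionRing A) s = algebraMap A (FractionRing A) a := by
  obtain ⟨⟨α, β⟩, hαβ⟩ := IsLocalization.surj A⁰ z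
  set f : A →+* FractionRing A := algebraMap A (FractionRing A) with hf
  have hfinj : Function.Injective f := IsFractionRing.injective A (FractionRing A)
  have hfβ : f ↑β ≠ 0 := IsFractionRing.to_map_ne_zero_of_mem_nonZeroDivisors β.2
  set C : Ideal A := (Ideal.span {(β : A)}).colon (Ideal.span {α}) with hCdef
  by_cases hCP : C ≤ P₀
  · exfalso
    obtain ⟨P, hPmin, hPle⟩ := Ideal.exists_minimalPrimes_le hCP
    obtain ⟨a, s, hs, hzs⟩ := hz P hPmin.1.1 hPle (divTot_of_minimal hA hPmin)
    apply hs
    apply hPmin.1.2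
    rw [hCdef, Ideal.mem_colon_span_singleton, Ideal.mem_span_singleton']
    refine ⟨a, ?_⟩
    apply hfinj
    have hcalc : f (a * ↑β) = f (s * α) := by
      rw [_root_.map_mul, _root_.map_mul, ← hαβ, ← hzs]
      ring
    exact (hfinj hcalc) ▸ rfl
  · obtain ⟨s, hsC, hsP⟩ := SetLike.not_le_iff_exists.mp hCP
    rw [hCdef, Ideal.mem_colon_span_singleton, Ideal.mem_span_singleton'] at hsC
    obtain ⟨c, hc⟩ := hsC
    refine ⟨c, s, hsP, mul_right_cancel₀ hfβ ?_⟩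
    calc z * f s * f ↑β = (z * f ↑β) * f s := by ring
      _ = f α * f s := by rw [hαβ]
      _ = f (s * α) := by rw [_root_.map_mul]; ring
      _ = f (c * ↑β) := by rw [← hc]
      _ = f c * f ↑β := by rw [_root_.map_mul]

theorem mem_range_of_pvmd (hA : IsPVMD A) (z : FractionRing A)
    (hz : ∀ P : Ideal A, P.IsPrime → DivTot A P →
      ∃ a s : A, s ∉ P ∧ z * algebraMap A (FractionRing A) s = algebraMap A (FractionRing A) a) :
    ∃ a : A, algebraMap A (FractionRing A) a = z := by
  obtain ⟨⟨α, β⟩, hαβ⟩ := IsLocalization.surj A⁰ z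
  set f : A →+* FractionRing A := algebraMap A (FractionRing A) with hf
  have hfinj : Function.Injective f := IsFractionRing.injective A (FractionRing A)
  have hfβ : f ↑β ≠ 0 := IsFractionRing.to_map_ne_zero_of_mem_nonZeroDivisors β.2
  set C : Ideal A := (Ideal.span {(β : A)}).colon (Ideal.span {α}) with hCdef
  by_cases hCtop : C = ⊤
  · have h1C : (1 : A) ∈ C := hCtop ▸ Submodule.mem_top
    rw [hCdef, Ideal.mem_colon_span_singleton, Ideal.mem_span_singleton'] at h1C
    obtain ⟨c, hc⟩ := h1C
    rw [one_mul] at hc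
    refine ⟨c, mul_right_cancel₀ hfβ ?_⟩
    calc f c * f ↑β = f (c * ↑β) := by rw [_root_.map_mul]
      _ = f α := by rw [hc]
      _ = z * f ↑β := hαβ.symm
  · exfalso
    obtain ⟨Mx, hMx, hCM⟩ := Ideal.exists_le_maximal C hCtop
    have : Mx.IsPrime := hMx.isPrime
    obtain ⟨P, hPmin, _⟩ := Ideal.exists_minimalPrimes_le hCM
    obtain ⟨a, s, hs, hzs⟩ := hz P hPmin.1.1 (divTot_of_minimal hA hPmin)
    apply hs
    apply hPmin.1.2
    rw [hCdef, Ideal.mem_colon_span_singleton, Ideal.mem_span_singleton']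
    refine ⟨a, ?_⟩
    apply hfinj
    rw [_root_.map_mul, _root_.map_mul, ← hαβ, ← hzs]
    ring

theorem pvmd_no_lo (hA : IsPVMD A) (B : Subalgebra A (FractionRing A))
    (hB : LyingOverOverring A B) : B = ⊥ := by
  refine le_antisymm (fun z hz => ?_) bot_le
  rw [Algebra.mem_bot]
  obtain ⟨a, ha⟩ := mem_range_of_pvmd hA z (fun P hP hdiv => by
    obtain ⟨Q, hQ, hQP⟩ := hB P hP
    exact overring_loc hz hdiv hQ hQP)
  exact ⟨a, ha⟩

set_option maxHeartbeats 1000000 in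
set_option synthInstance.maxHeartbeats 1000000 in
theorem pvmd_gd_flat (hA : IsPVMD A) (B : Subalgebra A (FractionRing A))
    (hB : GoingDownOverring A B) : Module.Flat A B := by
  classical
  rw [Module.Flat.iff_forall_isTrivialRelation]
  intro l g xv hrel
  set f : A →+* FractionRing A := algebraMap A (FractionRing A) with hf
  have hfinj : Function.Injective f := IsFractionRing.injective A (FractionRing A)
  set S : Set A := {s : A | ∀ i, ∃ a : A, (xv i : FractionRing A) * f s = f a} with hS
  set D : Ideal B := Ideal.span (algebraMap A B '' S) with hD
  have hDtop : D = ⊤ := by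
    by_contra hDne
    obtain ⟨Q, hQmax, hDQ⟩ := Ideal.exists_le_maximal D hDne
    have hQ : Q.IsPrime := hQmax.isPrime
    set P : Ideal A := Q.comap (algebraMap A B) with hP
    have hPp : P.IsPrime := Ideal.IsPrime.comap _
    have hloc : ∀ i, ∃ a s : A, s ∉ P ∧ (xv i : FractionRing A) * f s = f a := by
      intro i
      refine step_loc hA _ hPp (fun P' hP' hle hdiv => ?_)
      obtain ⟨Q', hQ', _, hQ'P⟩ := hB P' P hP' hPp hle Q hQ rfl
      exact overring_loc (xv i).2 hdiv hQ' hQ'P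
    choose av sv hsv hxsv using hloc
    have hprod : (∏ i, sv i) ∈ S := by
      intro i
      refine ⟨av i * ∏ j ∈ Finset.univ.erase i, sv j, ?_⟩
      rw [← Finset.mul_prod_erase Finset.univ sv (Finset.mem_univ i)]
      rw [_root_.map_mul, _root_.map_mul, ← mul_assoc, hxsv i]
    have hPn : (∏ i, sv i) ∈ P :=
      Ideal.mem_comap.mpr (hDQ (Ideal.subset_span ⟨_, hprod, rfl⟩))
    obtain ⟨i, _, hi⟩ := Ideal.IsPrime.prod_mem_iff.mp hPn
    exact hsv i hi
  have h1D : (1 : B) ∈ D := hDtop ▸ Submodule.mem_top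
  rw [hD] at h1D
  obtain ⟨n, tc, gc, hsum⟩ := Submodule.mem_span_set'.mp h1D
  have hgc : ∀ k : Fin n, ∃ s : A, s ∈ S ∧ algebraMap A B s = (gc k : B) := fun k => (gc k).2
  choose σ hσS hσeq using hgc
  choose cM hcM using fun (k : Fin n) (i : Fin l) => hσS k i
  have hcoe1 : ((1 : B) : FractionRing A)
      = ∑ k : Fin n, f (σ k) * ((tc k : B) : FractionRing A) := by
    rw [← hsum, AddSubmonoidClass.coe_finset_sum]
    apply Finset.sum_congr rfl
    intro k _
    have hgk : (((gc k : B) : B) : FractionRing A) = f (σ k) := by rw [← hσeq k]; rfl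
    rw [smul_eq_mul, MulMemClass.coe_mul, hgk]
    ring
  refine ⟨n, fun i k => cM k i, fun k => tc k, ?_, ?_⟩
  · intro i
    apply Subtype.coe_injective
    dsimp only
    rw [AddSubmonoidClass.coe_finset_sum]
    have hterm : ∀ k : Fin n,
        ((cM k i • tc k : B) : FractionRing A)
          = f (cM k i) * ((tc k : B) : FractionRing A) := by
      intro k
      rw [SetLike.val_smul, Algebra.smul_def]
    rw [Finset.sum_congr rfl (fun k _ => hterm k)]
    calc ((xv i : B) : FractionRing A)
        = ((xv i : B) : FractionRing A) * ((1 : B) : FractionRing A) := by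
          rw [OneMemClass.coe_one, mul_one]
      _ = ∑ k : Fin n, f (cM k i) * ((tc k : B) : FractionRing A) := by
          rw [hcoe1, Finset.mul_sum]
          exact Finset.sum_congr rfl (fun k _ => by rw [← hcM k i]; ring)
  · intro k'
    apply hfinj
    rw [_root_.map_sum, _root_.map_zero]
    have hterm : ∀ i, f (g i * cM k' i)
        = f (σ k') * (f (g i) * ((xv i : B) : FractionRing A)) := by
      intro i
      rw [_root_.map_mul, ← hcM k' i]
      ring
    rw [Finset.sum_congr rfl (fun i _ => hterm i), ← Finset.mul_sum]
    have hrel' : ∑ i, f (g i) * ((xv i : B) : FractionRing A) = 0 := by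
      have h0 := congrArg (fun b : B => (b : FractionRing A)) hrel
      simp only [AddSubmonoidClass.coe_finset_sum, SetLike.val_smul, Algebra.smul_def,
        ZeroMemClass.coe_zero] at h0
      exact h0
    rw [hrel', mul_zero]

end PVMDProof


/-- A PVMD is perinormal and has no proper lying over overrings. -/
theorem pvmd_perinormal_no_lying_over (A : Type*) [CommRing A] [IsDomain A]
    (hA : IsPVMD A) :
    Perinormal A ∧ ∀ B : Subalgebra A (FractionRing A), LyingOverOverring A B → B = ⊥ :=
  ⟨fun B hB => pvmd_gd_flat hA B hB, fun B hB => pvmd_no_lo hA B hB⟩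
end

section
/- Every generalized Krull domain is perinormal. -/
open scoped nonZeroDivisors

section General
variable {R L : Type*} [CommRing R] [CommRing L] [Algebra R L]

/-- The ideal of denominators of b ∈ B. -/
def denomIdeal (B : Subalgebra R L) (b : B) : Ideal R where
  carrier := {a : R | ∃ a' : R, (b : L) * algebraMap R L a = algebraMap R L a'}
  add_mem' := by
    rintro r t ⟨r', hr⟩ ⟨t', ht⟩
    exact ⟨r' + t', by rw [map_add, map_add, mul_add, hr, ht]⟩
  zero_mem' := ⟨0, by simp⟩
  smul_mem' := by
    rintro r t ⟨t', ht⟩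
    refine ⟨r * t', ?_⟩
    rw [smul_eq_mul, map_mul, map_mul]
    calc (b : L) * (algebraMap R L r * algebraMap R L t)
        = algebraMap R L r * ((b : L) * algebraMap R L t) := by ring
      _ = algebraMap R L r * algebraMap R L t' := by rw [ht]

set_option maxHeartbeats 2000000 in
set_option synthInstance.maxHeartbeats 1000000 in
theorem flat_of_denom (B : Subalgebra R L) (hinj : Function.Injective (algebraMap R L))
    (hden : ∀ b : B, (denomIdeal B b).map (algebraMap R B) = ⊤) :
    Module.Flat R B := by
  classical
  have hBinj : Function.Injective (algebraMap R B) := by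
    intro a b h
    exact hinj (congrArg (Subtype.val) h)
  rw [Module.Flat.iff_lTensor_injective']
  intro I
  rw [injective_iff_map_eq_zero]
  intro z hz
  obtain ⟨T, rfl⟩ := TensorProduct.exists_finset (R := R) z
  set J : Ideal R := ∏ t ∈ T, denomIdeal B t.1 with hJ
  have hJtop : J.map (algebraMap R B) = ⊤ := by
    rw [hJ]
    have : ∀ s : Finset (B × I), (Ideal.map (algebraMap R B) (∏ t ∈ s, denomIdeal B t.1)) = ⊤ := by
      intro s
      induction s using Finset.induction_on with
      | empty =>
          rw [Finset.prod_empty, Ideal.one_eq_top, Ideal.map_top]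
      | insert _ _ hni ih =>
          rw [Finset.prod_insert hni, Ideal.map_mul, ih, Ideal.mul_top]
          exact hden _
    exact this T
  -- the image of z under lTensor is zero, giving a relation in B
  have hrel : ∑ t ∈ T, ((t.2 : R) • t.1 : B) = 0 := by
    have hz' : ∑ i ∈ T, (i.1 ⊗ₜ[R] ((i.2 : R))) = (0 : TensorProduct R (↥B) R) := by
      rw [← hz, map_sum]
      exact Finset.sum_congr rfl fun t _ => by rw [LinearMap.lTensor_tmul]; rfl
    have h2 := congrArg (TensorProduct.rid R (↥B)) hz'
    rw [map_sum, map_zero] at h2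
    rw [← h2]
    refine (Finset.sum_congr rfl fun t _ => ?_).symm
    exact TensorProduct.rid_tmul t.1 ((t.2 : R))
  -- key: j • z = 0 for any j in J
  have hkey : ∀ j ∈ J, (algebraMap R B j) • (∑ t ∈ T, t.1 ⊗ₜ[R] t.2) = 0 := by
    intro j hj
    have hjt : ∀ t ∈ T, j ∈ denomIdeal B t.1 := by
      intro t ht
      exact (le_trans Ideal.prod_le_inf (Finset.inf_le ht) : J ≤ denomIdeal B t.1) hj
    choose! w hw using fun t (ht : t ∈ T) => hjt t ht
    have hwB : ∀ t ∈ T, (algebraMap R B j) * t.1 = algebraMap R B (w t) := by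
      intro t ht
      apply Subtype.ext
      push_cast
      rw [mul_comm]
      exact hw t ht
    rw [Finset.smul_sum]
    have hterm : ∀ t ∈ T, (algebraMap R B j) • (t.1 ⊗ₜ[R] t.2)
        = (1 : B) ⊗ₜ[R] ((w t) • t.2) := by
      intro t ht
      rw [TensorProduct.smul_tmul', smul_eq_mul, hwB t ht]
      rw [Algebra.algebraMap_eq_smul_one]
      rw [TensorProduct.smul_tmul]
    rw [Finset.sum_congr rfl hterm, ← TensorProduct.tmul_sum]
    have hAzero : (∑ t ∈ T, w t * (t.2 : R)) = 0 := by
      apply hBinj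
      rw [map_zero, map_sum]
      have : ∀ t ∈ T, algebraMap R B (w t * (t.2 : R))
          = (algebraMap R B j) * ((t.2 : R) • t.1) := by
        intro t ht
        rw [map_mul, ← hwB t ht, Algebra.smul_def]
        ring
      rw [Finset.sum_congr rfl this, ← Finset.mul_sum, hrel, mul_zero]
    have hsum0 : (∑ t ∈ T, (w t) • t.2 : I) = 0 := by
      apply Subtype.ext
      have hcoe : ((∑ t ∈ T, (w t) • t.2 : I) : R) = ∑ t ∈ T, w t * (t.2 : R) := by
        push_cast
        rfl
      rw [hcoe, hAzero]
      rfl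
    rw [hsum0, TensorProduct.tmul_zero]
  -- write 1 as a combination of elements of the image of J
  have h1 : (1 : B) ∈ Ideal.map (algebraMap R B) J := by rw [hJtop]; trivial
  rw [Ideal.map, Ideal.span, Submodule.mem_span_set'] at h1
  obtain ⟨n, coeff, gen, hgen⟩ := h1
  have hgen0 : ∀ i : Fin n, ((gen i : B)) • (∑ t ∈ T, t.1 ⊗ₜ[R] t.2) = 0 := by
    intro i
    obtain ⟨j, hj, hje⟩ := (gen i).2
    rw [← hje]
    exact hkey j hj
  calc (∑ t ∈ T, t.1 ⊗ₜ[R] t.2)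
      = (1 : B) • (∑ t ∈ T, t.1 ⊗ₜ[R] t.2) := (one_smul B _).symm
    _ = (∑ i : Fin n, coeff i • (gen i : B)) • (∑ t ∈ T, t.1 ⊗ₜ[R] t.2) := by rw [hgen]
    _ = ∑ i : Fin n, (coeff i • (gen i : B)) • (∑ t ∈ T, t.1 ⊗ₜ[R] t.2) := by
        rw [Finset.sum_smul]
    _ = 0 := by
        refine Finset.sum_eq_zero fun i _ => ?_
        rw [smul_eq_mul, mul_smul, hgen0 i, smul_zero]

end General

section Aux

variable {A : Type*} [CommRing A] [IsDomain A]

local notation "K" => FractionRing A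
local notation "algK" => algebraMap A (FractionRing A)

lemma algK_inj : Function.Injective (algebraMap A (FractionRing A)) :=
  IsFractionRing.injective A (FractionRing A)

lemma locSet_mul {P : Ideal A} (hP : P.IsPrime) {x y : K}
    (hx : x ∈ locSet A K P) (hy : y ∈ locSet A K P) : x * y ∈ locSet A K P := by
  obtain ⟨a, s, hs, h⟩ := hx
  obtain ⟨b, t, ht, h'⟩ := hy
  refine ⟨a * b, s * t, fun hm => (hP.mem_or_mem hm).elim hs ht, ?_⟩
  rw [map_mul, map_mul]
  calc x * y * (algK s * algK t) = (x * algK s) * (y * algK t) := by ring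
  _ = algK a * algK b := by rw [h, h']

lemma locSet_algebraMap {P : Ideal A} (hP : P.IsPrime) (a : A) :
    algK a ∈ locSet A K P :=
  ⟨a, 1, fun h1 => hP.ne_top ((Ideal.eq_top_iff_one P).mpr h1), by rw [map_one, mul_one]⟩

variable {B : Subalgebra A (FractionRing A)}

/-- Archimedean-type lemma in a height-one valued prime. -/
lemma arch_lemma {q : Ideal A} (hq : q ∈ HtOnePrimes A) (hval : ValuedPrime A q)
    {c : A} (hc : c ∈ q) (hc0 : c ≠ 0) {x y : A} (hy : y ≠ 0) :
    ∃ (k : ℕ) (a s : A), s ∉ q ∧ c ^ k * x * s = a * y := by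
  obtain ⟨hqp, hvr⟩ := hval
  haveI := hqp
  haveI := hvr
  set V := Localization.AtPrime q with hV
  let f := algebraMap A V
  have finj : Function.Injective f := IsLocalization.injective V q.primeCompl_le_nonZeroDivisors
  -- first: ∃ k, f y ∣ (f c) ^ k
  have key : ∃ k : ℕ, f y ∣ (f c) ^ k := by
    by_contra hcon
    push_neg at hcon
    -- build the prime ideal P = ⋂ (f c)^k V
    have hdvd_total : ∀ a b : V, a ∣ b ∨ b ∣ a := by
      intro a b
      obtain ⟨z, hz | hz⟩ := ValuationRing.cond a b
      · exact Or.inl ⟨z, hz.symm⟩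
      · exact Or.inr ⟨z, hz.symm⟩
    set P : Ideal V :=
      { carrier := {z : V | ∀ k : ℕ, (f c) ^ k ∣ z}
        add_mem' := fun hz hw k => dvd_add (hz k) (hw k)
        zero_mem' := fun k => dvd_zero _
        smul_mem' := fun r z hz k => (hz k).mul_left r } with hP
    have hfc0 : f c ≠ 0 := fun h => hc0 (finj (by rw [h, map_zero]))
    have hfcnu : ¬ IsUnit (f c) := by
      rw [IsLocalization.AtPrime.isUnit_to_map_iff V q c]
      exact fun h => h hc
    have hPprime : P.IsPrime := by
      constructor
      · intro htop
        have h1 : (1 : V) ∈ P := htop ▸ Submodule.mem_top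
        have := h1 1
        rw [pow_one] at this
        exact hfcnu (isUnit_of_dvd_one this)
      · intro a b hab
        by_contra hcon2
        push_neg at hcon2
        obtain ⟨ha, hb⟩ := hcon2
        obtain ⟨i, hi⟩ : ∃ i, ¬ (f c) ^ i ∣ a := by
          by_contra h; push_neg at h; exact ha (fun k => h k)
        obtain ⟨j, hj⟩ : ∃ j, ¬ (f c) ^ j ∣ b := by
          by_contra h; push_neg at h; exact hb (fun k => h k)
        have ha0 : a ≠ 0 := fun h => hi (h ▸ dvd_zero _)
        have hadvd : a ∣ (f c) ^ i := (hdvd_total _ _).resolve_left hi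
        obtain ⟨u, hu⟩ := hadvd
        obtain ⟨w, hw⟩ := hab (i + j)
        rw [pow_add, hu] at hw
        have : a * (b - u * ((f c) ^ j * w)) = 0 := by linear_combination hw
        have hb' : b = u * ((f c) ^ j * w) := by
          rcases mul_eq_zero.mp this with h | h
          · exact absurd h ha0
          · exact sub_eq_zero.mp h
        exact hj ⟨u * w, by rw [hb']; ring⟩
    -- y ∈ P
    have hyP : f y ∈ P := fun k => ((hdvd_total (f y) ((f c) ^ k)).resolve_left (hcon k))
    have hcP : f c ∉ P := by
      intro h
      obtain ⟨w, hw⟩ := h 2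
      have : f c * (1 - f c * w) = 0 := by linear_combination hw
      rcases mul_eq_zero.mp this with h' | h'
      · exact hfc0 h'
      · exact hfcnu (IsUnit.of_mul_eq_one w (sub_eq_zero.mp h').symm)
    set P₀ : Ideal A := P.comap f with hP₀
    haveI hP₀prime : P₀.IsPrime := hPprime.comap f
    have hP₀le : P₀ < q := by
      constructor
      · intro a haP
        by_contra haq
        have : IsUnit (f a) := (IsLocalization.AtPrime.isUnit_to_map_iff V q a).mpr haq
        exact hPprime.ne_top (P.eq_top_of_isUnit_mem haP this)
      · intro hle
        exact hcP (hle hc)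
    have := hq.2.2 P₀ hP₀prime hP₀le
    have hyP₀ : y ∈ P₀ := hyP
    rw [this] at hyP₀
    exact hy (by simpa using hyP₀)
  obtain ⟨k, v, hv⟩ := key
  obtain ⟨⟨a, s⟩, rfl⟩ := IsLocalization.mk'_surjective q.primeCompl v
  have h1 : f (c ^ k * x * s) = f (y * (x * a)) := by
    rw [map_mul, map_mul, map_pow, hv, map_mul, map_mul]
    calc f y * IsLocalization.mk' V a s * f x * f s
        = f y * f x * (IsLocalization.mk' V a s * f s) := by ring
      _ = f y * f x * f a := by rw [IsLocalization.mk'_spec]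
      _ = f y * (f x * f a) := by ring
  obtain ⟨u, hu⟩ := (IsLocalization.eq_iff_exists q.primeCompl V).mp h1
  refine ⟨k, x * a * u, s * u, fun hm => ?_, ?_⟩
  · rcases hqp.mem_or_mem hm with h | h
    · exact s.2 h
    · exact u.2 h
  · calc c ^ k * x * (↑s * ↑u) = ↑u * (c ^ k * x * ↑s) := by ring
      _ = ↑u * (y * (x * a)) := hu
      _ = x * a * ↑u * y := by ring

/-- Core claim: if z is locally integral at every height-one prime below p,
then z is p-integral. -/
lemma core_claim (hA : IsGenKrull A) {p : Ideal A} (hp : p.IsPrime) {z : K} {x y : A}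
    (hy : y ≠ 0) (hz : z * algK y = algK x)
    (h : ∀ q ∈ HtOnePrimes A, q ≤ p → z ∈ locSet A K q) :
    z ∈ locSet A K p := by
  classical
  have hyK : algK y ≠ 0 := fun h0 => hy (algK_inj (by rw [h0, map_zero]))
  -- the bad set
  have hSfin : {q : Ideal A | q ∈ HtOnePrimes A ∧ z ∉ locSet A K q}.Finite := by
    refine (hA.2.1 y hy).subset ?_
    rintro q ⟨hq1, hq2⟩
    refine ⟨hq1, ?_⟩
    by_contra hyq
    exact hq2 ⟨x, y, hyq, hz⟩
  set F := hSfin.toFinset with hF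
  have hFmem : ∀ q ∈ F, q ∈ HtOnePrimes A ∧ z ∉ locSet A K q := by
    intro q hqF
    rw [hF, Set.Finite.mem_toFinset] at hqF
    exact hqF
  -- choose c and k for each bad prime
  have hchoice : ∀ q ∈ F, ∃ t : A, t ∉ p ∧ algK t * z ∈ locSet A K q := by
    intro q hqF
    obtain ⟨hq1, hq2⟩ := hFmem q hqF
    have hnle : ¬ q ≤ p := fun hle => hq2 (h q hq1 hle)
    obtain ⟨c, hcq, hcp⟩ := SetLike.not_le_iff_exists.mp hnle
    have hc0 : c ≠ 0 := fun h0 => hcp (h0 ▸ p.zero_mem)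
    obtain ⟨k, a, s, hs, heq⟩ := arch_lemma hq1 (hA.2.2 q hq1) hcq hc0 hy (x := x)
    refine ⟨c ^ k, fun hm => hcp (hp.mem_of_pow_mem k hm), a, s, hs, ?_⟩
    have : algK (c ^ k) * z * algK s * algK y = algK a * algK y := by
      calc algK (c ^ k) * z * algK s * algK y
          = algK (c ^ k) * algK s * (z * algK y) := by ring
        _ = algK (c ^ k) * algK s * algK x := by rw [hz]
        _ = algK (c ^ k * x * s) := by rw [map_mul, map_mul]; ring
        _ = algK (a * y) := by rw [heq]
        _ = algK a * algK y := by rw [map_mul]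
    exact mul_right_cancel₀ hyK this
  choose! t ht1 ht2 using hchoice
  set T : A := ∏ q ∈ F, t q with hT
  have hTp : T ∉ p := by
    rw [hT]
    refine Finset.prod_induction t (· ∉ p) ?_ ?_ ?_
    · intro a b ha hb hm
      exact ((hp.mem_or_mem hm).elim ha hb)
    · exact fun h1 => hp.ne_top ((Ideal.eq_top_iff_one p).mpr h1)
    · exact fun q hqF => ht1 q hqF
  have hTz : ∀ q ∈ HtOnePrimes A, algK T * z ∈ locSet A K q := by
    intro q' hq'
    by_cases hq'F : q' ∈ F
    · have hmem := locSet_mul hq'.1 (locSet_algebraMap hq'.1 (∏ q ∈ F.erase q', t q))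
        (ht2 q' hq'F)
      have heqT : algK T * z = algK (∏ q ∈ F.erase q', t q) * (algK (t q') * z) := by
        rw [hT, ← Finset.mul_prod_erase F t hq'F, map_mul]; ring
      rw [heqT]; exact hmem
    · have hzq : z ∈ locSet A K q' := by
        by_contra hcon
        exact hq'F (by rw [hF, Set.Finite.mem_toFinset]; exact ⟨hq', hcon⟩)
      exact locSet_mul hq'.1 (locSet_algebraMap hq'.1 T) hzq
  have hrange : algK T * z ∈ Set.range (algebraMap A (FractionRing A)) := by
    rw [hA.1]
    exact Set.mem_iInter₂.mpr hTz
  obtain ⟨a, ha⟩ := hrange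
  exact ⟨a, T, hTp, by rw [mul_comm z]; exact ha.symm⟩

/-- Main lemma: every element of a going down overring is `p`-integral for
`p` the contraction of any prime of `B`. -/
lemma going_down_denom (hA : IsGenKrull A) (hB : GoingDownOverring A B)
    {Q : Ideal B} (hQ : Q.IsPrime) (b : B) :
    (b : K) ∈ locSet A K (Q.comap (algebraMap A B)) := by
  set p := Q.comap (algebraMap A B) with hpdef
  haveI hp : p.IsPrime := hQ.comap (algebraMap A B)
  obtain ⟨⟨x, y⟩, hxy'⟩ := IsLocalization.surj A⁰ (b : K)
  have hxy : (b : K) * algK (y : A) = algK x := hxy'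
  have hy : (y : A) ≠ 0 := nonZeroDivisors.ne_zero y.2
  have hyK : algK (y : A) ≠ 0 := fun h0 => hy (algK_inj (by rw [h0, map_zero]))
  refine core_claim hA hp hy hxy ?_
  intro q hq hqp
  by_contra hmem
  obtain ⟨hqprime, hvr⟩ := hA.2.2 q hq
  haveI := hqprime
  haveI := hvr
  set V := Localization.AtPrime q with hV
  let f := algebraMap A V
  obtain ⟨v, hv⟩ := ValuationRing.cond (f x) (f y)
  obtain ⟨⟨a, s⟩, rfl⟩ := IsLocalization.mk'_surjective q.primeCompl v
  dsimp only at hv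
  rcases hv with hv | hv
  · -- f x * v = f y : x * a ≡ y * s, so y/x "∈ A_q": leads to contradiction via going down
    have h1 : f (x * a) = f (y * (s : A)) := by
      rw [map_mul, map_mul]
      calc f x * f a = f x * (IsLocalization.mk' V a s * f s) := by
            rw [IsLocalization.mk'_spec]
        _ = (f x * IsLocalization.mk' V a s) * f s := by ring
        _ = f y * f s := by rw [hv]
    obtain ⟨u, hu⟩ := (IsLocalization.eq_iff_exists q.primeCompl V).mp h1
    -- x * (a * u) = y * (s * u)
    have hxa : x * (a * (u : A)) = y * ((s : A) * (u : A)) := by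
      calc x * (a * (u : A)) = (u : A) * (x * a) := by ring
        _ = (u : A) * (y * (s : A)) := hu
        _ = y * ((s : A) * (u : A)) := by ring
    by_cases hau : a * (u : A) ∈ q
    · -- the interesting case: d := a*u ∈ q
      set d := a * (u : A) with hd
      set s'' := (s : A) * (u : A) with hs''
      have hs''q : s'' ∉ q := fun hm =>
        (hqprime.mem_or_mem hm).elim (fun h' => s.2 h') (fun h' => u.2 h')
      -- (b : K) * algK d = algK s''
      have hKxa : algK x * algK d = algK (y : A) * algK s'' := by
        rw [← map_mul, ← map_mul, hd, hs'', hxa]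
      have hbd : (b : K) * algK d = algK s'' := by
        have : (b : K) * algK d * algK (y : A) = algK s'' * algK (y : A) := by
          linear_combination algK d * hxy + hKxa
        exact mul_right_cancel₀ hyK this
      obtain ⟨Q', hQ'p, hQ'le, hQ'c⟩ := hB q p hqprime hp hqp Q hQ rfl
      have hdQ' : algebraMap A B d ∈ Q' := by
        rw [← hQ'c] at hau
        exact hau
      have hmul : b * algebraMap A B d = algebraMap A B s'' := by
        apply Subtype.ext
        push_cast
        exact hbd
      have : algebraMap A B s'' ∈ Q' := hmul ▸ Ideal.mul_mem_left Q' b hdQ'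
      have : s'' ∈ q := by rw [← hQ'c]; exact this
      exact hs''q this
    · -- a * u ∉ q : then b ∈ locSet q, contradiction
      refine hmem ⟨(s : A) * (u : A), a * (u : A), hau, ?_⟩
      have hKxa : algK x * algK (a * (u : A)) = algK (y : A) * algK ((s : A) * (u : A)) := by
        rw [← map_mul, ← map_mul, hxa]
      have : (b : K) * algK (a * (u : A)) * algK (y : A)
          = algK ((s : A) * (u : A)) * algK (y : A) := by
        linear_combination algK (a * (u : A)) * hxy + hKxa
      exact mul_right_cancel₀ hyK this
  · -- f y * v = f x : then b ∈ locSet q directly, contradiction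
    have h1 : f (y * a) = f (x * (s : A)) := by
      rw [map_mul, map_mul]
      calc f y * f a = f y * (IsLocalization.mk' V a s * f s) := by
            rw [IsLocalization.mk'_spec]
        _ = (f y * IsLocalization.mk' V a s) * f s := by ring
        _ = f x * f s := by rw [hv]
    obtain ⟨u, hu⟩ := (IsLocalization.eq_iff_exists q.primeCompl V).mp h1
    have hya : y * (a * (u : A)) = x * ((s : A) * (u : A)) := by
      calc y * (a * (u : A)) = (u : A) * (y * a) := by ring
        _ = (u : A) * (x * (s : A)) := hu
        _ = x * ((s : A) * (u : A)) := by ring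
    have hsu : (s : A) * (u : A) ∉ q := fun hm =>
      (hqprime.mem_or_mem hm).elim (fun h' => s.2 h') (fun h' => u.2 h')
    refine hmem ⟨a * (u : A), (s : A) * (u : A), hsu, ?_⟩
    have hKya : algK (y : A) * algK (a * (u : A)) = algK x * algK ((s : A) * (u : A)) := by
      rw [← map_mul, ← map_mul, hya]
    have : (b : K) * algK ((s : A) * (u : A)) * algK (y : A)
        = algK (a * (u : A)) * algK (y : A) := by
      linear_combination algK ((s : A) * (u : A)) * hxy - hKya
    exact mul_right_cancel₀ hyK this

lemma denom_map_top (hA : IsGenKrull A) (hB : GoingDownOverring A B) (b : B) :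
    (denomIdeal B b).map (algebraMap A B) = ⊤ := by
  by_contra hne
  obtain ⟨Q, hQmax, hle⟩ := Ideal.exists_le_maximal _ hne
  obtain ⟨a, s, hs, heq⟩ := going_down_denom hA hB hQmax.isPrime b
  have hsJ : s ∈ denomIdeal B b := ⟨a, heq⟩
  have : algebraMap A B s ∈ Q := hle (Ideal.mem_map_of_mem _ hsJ)
  exact hs this

end Aux

/-- A generalized Krull domain is perinormal. -/
theorem genKrull_perinormal (A : Type*) [CommRing A] [IsDomain A]
    (hA : IsGenKrull A) : Perinormal A := by
  intro B hB
  exact flat_of_denom B (IsFractionRing.injective A (FractionRing A))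
    (fun b => denom_map_top hA hB b)
end

section
/- A treed perinormal domain is a Prüfer domain: if A is a domain in which any two incomparable prime ideals are comaximal and A is perinormal, then A_M is a valuation domain for every maximal ideal M of A. -/
open scoped nonZeroDivisors

namespace TPaux

open IsLocalRing

variable {A : Type*} [CommRing A] {K : Type*} [Field K]

def resHom (φ : A →+* K) (V : ValuationSubring K) (h : ∀ a, φ a ∈ V) : A →+* V :=
  φ.codRestrict V.toSubring h

@[simp] lemma resHom_coe (φ : A →+* K) (V : ValuationSubring K) (h : ∀ a, φ a ∈ V) (a : A) :
    (resHom φ V h a : K) = φ a := rfl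

lemma isUnit_valSub_iff {B : ValuationSubring K} (y : B) :
    IsUnit y ↔ (y : K) ≠ 0 ∧ ((y : K)⁻¹ ∈ B) := by
  constructor
  · intro hy
    obtain ⟨c, hc⟩ := isUnit_iff_exists_inv.mp hy
    have hc' : (y : K) * (c : K) = 1 := by exact_mod_cast congrArg Subtype.val hc
    have hy0 : (y : K) ≠ 0 := by
      intro h0; rw [h0, zero_mul] at hc'; exact zero_ne_one hc'
    refine ⟨hy0, ?_⟩
    have : (c : K) = (y : K)⁻¹ := eq_inv_of_mul_eq_one_left (by rw [mul_comm] at hc'; exact hc')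
    rw [← this]; exact c.2
  · rintro ⟨hy0, hyi⟩
    refine isUnit_iff_exists_inv.mpr ⟨⟨(y : K)⁻¹, hyi⟩, ?_⟩
    ext
    push_cast
    exact mul_inv_cancel₀ hy0

lemma isUnit_iff_of_dom {A' : Subring K} {P' : Ideal A'} [P'.IsPrime]
    {B : ValuationSubring K} (hd : LocalSubring.ofPrime A' P' ≤ B.toLocalSubring)
    (a : A') (haB : a.1 ∈ B) :
    IsUnit (⟨a.1, haB⟩ : B) ↔ a ∉ P' := by
  obtain ⟨hle, hloc⟩ := hd
  have h1 : a.1 ∈ (LocalSubring.ofPrime A' P').toSubring := LocalSubring.le_ofPrime A' P' a.2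
  have key : IsUnit (⟨a.1, h1⟩ : (LocalSubring.ofPrime A' P').toSubring) ↔ a ∉ P' := by
    have h2 := IsLocalization.AtPrime.isUnit_to_map_iff
      ((LocalSubring.ofPrime A' P').toSubring) P' a
    exact h2
  constructor
  · intro hu
    exact key.mp (hloc.1 _ hu)
  · intro hp
    exact (key.mpr hp).map (Subring.inclusion hle)

/-- Base case: a valuation subring whose maximal ideal contracts to a given prime. -/
lemma exists_valuation_base (φ : A →+* K) (hinj : Function.Injective φ)
    (P : Ideal A) [P.IsPrime] :
    ∃ (V : ValuationSubring K) (h : ∀ a, φ a ∈ V),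
      (maximalIdeal V).comap (resHom φ V h) = P := by
  have hsurj : Function.Surjective φ.rangeRestrict := φ.rangeRestrict_surjective
  have hker : RingHom.ker φ.rangeRestrict ≤ P := by
    intro x hx
    rw [RingHom.mem_ker] at hx
    have hx' : φ x = 0 := congrArg Subtype.val hx
    have : x = 0 := hinj (by simpa using hx')
    simp [this]
  haveI : (P.map φ.rangeRestrict).IsPrime := Ideal.map_isPrime_of_surjective hsurj hker
  obtain ⟨B, hB⟩ :=
    (LocalSubring.ofPrime φ.range (P.map φ.rangeRestrict)).exists_le_valuationSubring
  have hmem : ∀ a, φ a ∈ B := fun a => hB.1 (LocalSubring.le_ofPrime _ _ ⟨a, rfl⟩)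
  refine ⟨B, hmem, ?_⟩
  have hcm : (P.map φ.rangeRestrict).comap φ.rangeRestrict = P := by
    rw [Ideal.comap_map_of_surjective _ hsurj]
    exact sup_eq_left.mpr hker
  ext a
  rw [Ideal.mem_comap, mem_maximalIdeal, mem_nonunits_iff]
  have hiff := isUnit_iff_of_dom hB (φ.rangeRestrict a) (hmem a)
  constructor
  · intro hnu
    have : φ.rangeRestrict a ∈ P.map φ.rangeRestrict := by
      by_contra hc
      exact hnu (hiff.mpr hc)
    rw [← hcm]; exact this
  · intro haP hu
    have : φ.rangeRestrict a ∉ P.map φ.rangeRestrict := hiff.mp hu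
    exact this (by rw [← hcm] at haP; exact haP)


/-- Composite step: refine a valuation subring above a larger prime. -/
lemma exists_valuation_step (φ : A →+* K) (V : ValuationSubring K) (h : ∀ a, φ a ∈ V)
    {P P' : Ideal A} [P'.IsPrime]
    (hmax : (maximalIdeal V).comap (resHom φ V h) = P) (hPP' : P ≤ P') :
    ∃ (W : ValuationSubring K) (hw : ∀ a, φ a ∈ W) (_ : W ≤ V),
      (maximalIdeal W).comap (resHom φ W hw) = P' := by
  classical
  set ψ : A →+* ResidueField V := (residue V).comp (resHom φ V h) with hψdef
  have hkerψ : ∀ a : A, ψ a = 0 ↔ a ∈ P := by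
    intro a
    rw [hψdef, RingHom.comp_apply, residue_eq_zero_iff, ← hmax]
    rfl
  have hkerrr : RingHom.ker ψ.rangeRestrict ≤ P' := by
    intro x hx
    rw [RingHom.mem_ker] at hx
    have hx' : ψ x = 0 := congrArg Subtype.val hx
    exact hPP' ((hkerψ x).mp hx')
  haveI : (P'.map ψ.rangeRestrict).IsPrime :=
    Ideal.map_isPrime_of_surjective ψ.rangeRestrict_surjective hkerrr
  obtain ⟨B, hB⟩ :=
    (LocalSubring.ofPrime ψ.range (P'.map ψ.rangeRestrict)).exists_le_valuationSubring
  have hcm : (P'.map ψ.rangeRestrict).comap ψ.rangeRestrict = P' := by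
    rw [Ideal.comap_map_of_surjective _ ψ.rangeRestrict_surjective]
    exact sup_eq_left.mpr hkerrr
  have hψB : ∀ a : A, ψ a ∈ B := fun a => hB.1 (LocalSubring.le_ofPrime _ _ ⟨a, rfl⟩)
  -- the composite subring
  set S₀ : Subring K := (B.toSubring.comap (residue V)).map V.toSubring.subtype with hS₀def
  have hmemS₀ : ∀ x : K, x ∈ S₀ ↔ ∃ hx : x ∈ V, residue V ⟨x, hx⟩ ∈ B := by
    intro x
    constructor
    · rintro ⟨y, hy, rfl⟩
      exact ⟨y.2, hy⟩
    · rintro ⟨hx, hr⟩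
      exact ⟨⟨x, hx⟩, hr, rfl⟩
  have key : ∀ x : K, x ∈ V → (x ∈ S₀ ∨ x⁻¹ ∈ S₀) := by
    intro x hx
    by_cases hm : (⟨x, hx⟩ : V) ∈ maximalIdeal V
    · left
      refine (hmemS₀ x).mpr ⟨hx, ?_⟩
      rw [(residue_eq_zero_iff _).mpr hm]
      exact B.zero_mem
    · have hu : IsUnit (⟨x, hx⟩ : V) := by
        rw [mem_maximalIdeal, mem_nonunits_iff, not_not] at hm
        exact hm
      have hx0 : x ≠ 0 := by
        rintro rfl
        exact not_isUnit_zero (by exact_mod_cast hu)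
      obtain ⟨hxne, hxinv⟩ := (isUnit_valSub_iff _).mp hu
      have hres : residue V ⟨x, hx⟩ * residue V ⟨x⁻¹, hxinv⟩ = 1 := by
        rw [← map_mul, ← map_one (residue V)]
        congr 1
        ext
        push_cast
        exact mul_inv_cancel₀ hx0
      rcases B.mem_or_inv_mem (residue V ⟨x, hx⟩) with hb | hb
      · exact Or.inl ((hmemS₀ x).mpr ⟨hx, hb⟩)
      · right
        refine (hmemS₀ x⁻¹).mpr ⟨hxinv, ?_⟩
        rw [show residue V ⟨x⁻¹, hxinv⟩ = (residue V ⟨x, hx⟩)⁻¹ from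
          eq_inv_of_mul_eq_one_right hres]
        exact hb
  have hvp : ∀ x : K, x ∈ S₀ ∨ x⁻¹ ∈ S₀ := by
    intro x
    rcases V.mem_or_inv_mem x with hx | hx
    · exact key x hx
    · rcases key _ hx with h1 | h1
      · exact Or.inr h1
      · left; rwa [inv_inv] at h1
  set W : ValuationSubring K := ⟨S₀, hvp⟩ with hWdef
  have hw : ∀ a, φ a ∈ W := fun a => (hmemS₀ _).mpr ⟨h a, hψB a⟩
  have hWV : W ≤ V := fun x hxS => ((hmemS₀ x).mp hxS).1
  refine ⟨W, hw, hWV, ?_⟩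
  -- the key unit characterization in W
  have hunit : ∀ a : A, IsUnit (resHom φ W hw a) ↔ a ∉ P' := by
    intro a
    have hBiff : IsUnit (⟨ψ a, hψB a⟩ : B) ↔ a ∉ P' := by
      have hdom : IsUnit (⟨ψ a, hψB a⟩ : B) ↔ ψ.rangeRestrict a ∉ P'.map ψ.rangeRestrict :=
        isUnit_iff_of_dom hB (ψ.rangeRestrict a) (hψB a)
      rw [hdom]
      constructor
      · intro h1 h2
        exact h1 (by rw [← hcm] at h2; exact h2)
      · intro h1 h2
        rw [← hcm] at h1
        exact h1 h2
    rw [← hBiff]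
    constructor
    · intro hu
      obtain ⟨hne, hinvW⟩ := (isUnit_valSub_iff _).mp hu
      have hne' : (φ a : K) ≠ 0 := hne
      obtain ⟨hinvV, hresB⟩ := (hmemS₀ _).mp hinvW
      have hres : ψ a * residue V ⟨(φ a)⁻¹, hinvV⟩ = 1 := by
        rw [hψdef, RingHom.comp_apply, ← map_mul, ← map_one (residue V)]
        congr 1
        ext
        push_cast
        exact mul_inv_cancel₀ hne'
      refine (isUnit_valSub_iff _).mpr ⟨?_, ?_⟩
      · intro h0
        have h0' : ψ a = 0 := h0
        rw [h0', zero_mul] at hres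
        exact zero_ne_one hres
      · show (ψ a)⁻¹ ∈ B
        rw [show (ψ a)⁻¹ = residue V ⟨(φ a)⁻¹, hinvV⟩ from
            (eq_inv_of_mul_eq_one_right hres).symm]
        exact hresB
    · intro hu
      obtain ⟨hne, hinvB⟩ := (isUnit_valSub_iff _).mp hu
      have hne' : ψ a ≠ 0 := hne
      have hVnotmax : (resHom φ V h a) ∉ maximalIdeal V := by
        intro hmm
        exact hne' ((residue_eq_zero_iff _).mpr hmm)
      have huV : IsUnit (resHom φ V h a) := by
        rw [mem_maximalIdeal, mem_nonunits_iff, not_not] at hVnotmax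
        exact hVnotmax
      obtain ⟨hne2, hinvV⟩ := (isUnit_valSub_iff _).mp huV
      have hne2' : (φ a : K) ≠ 0 := hne2
      have hres : ψ a * residue V ⟨(φ a)⁻¹, hinvV⟩ = 1 := by
        rw [hψdef, RingHom.comp_apply, ← map_mul, ← map_one (residue V)]
        congr 1
        ext
        push_cast
        exact mul_inv_cancel₀ hne2'
      refine (isUnit_valSub_iff _).mpr ⟨hne2', ?_⟩
      refine (hmemS₀ _).mpr ⟨hinvV, ?_⟩
      show residue V ⟨(φ a)⁻¹, hinvV⟩ ∈ B
      rw [show residue V ⟨(φ a)⁻¹, hinvV⟩ = (ψ a)⁻¹ from eq_inv_of_mul_eq_one_right hres]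
      exact hinvB
  ext a
  rw [Ideal.mem_comap, mem_maximalIdeal, mem_nonunits_iff]
  constructor
  · intro hnu
    by_contra hc
    exact hnu ((hunit a).mpr hc)
  · intro haP hu
    exact (hunit a).mp hu haP

/-- Lifting a finite chain of primes into a single valuation subring. -/
lemma exists_valuation_finset (φ : A →+* K) (hinj : Function.Injective φ) :
    ∀ (n : ℕ) (u : Finset (Ideal A)), u.card = n → u.Nonempty →
    (∀ P ∈ u, P.IsPrime) → (∀ P ∈ u, ∀ Q ∈ u, P ≤ Q ∨ Q ≤ P) →
    ∃ (V : ValuationSubring K) (h : ∀ a, φ a ∈ V),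
      ∃ T ∈ u, (∀ P ∈ u, P ≤ T) ∧
      (maximalIdeal V).comap (resHom φ V h) = T ∧
      ∀ P ∈ u, ∃ Q : Ideal V, Q.IsPrime ∧ Q.comap (resHom φ V h) = P := by
  classical
  intro n
  induction n with
  | zero =>
    intro u hcard hne
    rw [Finset.card_eq_zero] at hcard
    subst hcard
    exact absurd hne (by simp)
  | succ n ih =>
    intro u hcard hne hp hc
    obtain ⟨T, hTu, hTmax⟩ := u.exists_maximal hne
    have hTtop : ∀ P ∈ u, P ≤ T := by
      intro P hP
      rcases hc P hP T hTu with h1 | h1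
      · exact h1
      · by_cases hPT : P = T
        · exact hPT.le
        · exact absurd (le_antisymm (hTmax hP h1) h1) hPT
    haveI := hp T hTu
    by_cases hE : (u.erase T).Nonempty
    · have hcard' : (u.erase T).card = n := by
        rw [Finset.card_erase_of_mem hTu, hcard]
        rfl
      obtain ⟨V', h', T', hT'mem, hT'top, hmax', hprimes'⟩ :=
        ih (u.erase T) hcard' hE (fun P hP => hp P (Finset.mem_of_mem_erase hP))
          (fun P hP Q hQ => hc P (Finset.mem_of_mem_erase hP) Q (Finset.mem_of_mem_erase hQ))
      have hT'T : T' ≤ T := hTtop T' (Finset.mem_of_mem_erase hT'mem)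
      obtain ⟨W, hw, hWV, hmaxW⟩ := exists_valuation_step φ V' h' hmax' hT'T
      have hcomp : resHom φ V' h' = (ValuationSubring.inclusion W V' hWV).comp (resHom φ W hw) :=
        RingHom.ext fun a => Subtype.ext rfl
      refine ⟨W, hw, T, hTu, hTtop, hmaxW, ?_⟩
      intro P hP
      by_cases hPT : P = T
      · exact ⟨maximalIdeal W, (maximalIdeal.isMaximal _).isPrime, by rw [hmaxW, hPT]⟩
      · obtain ⟨Q, hQp, hQc⟩ := hprimes' P (Finset.mem_erase.mpr ⟨hPT, hP⟩)
        haveI := hQp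
        refine ⟨Q.comap (ValuationSubring.inclusion W V' hWV), Ideal.IsPrime.comap _, ?_⟩
        rw [Ideal.comap_comap, ← hcomp, hQc]
    · have hu1 : ∀ P ∈ u, P = T := by
        intro P hP
        by_contra hne2
        exact hE ⟨P, Finset.mem_erase.mpr ⟨hne2, hP⟩⟩
      obtain ⟨V, h, hmax⟩ := exists_valuation_base φ hinj T
      refine ⟨V, h, T, hTu, fun P hP => (hu1 P hP).le, hmax, ?_⟩
      intro P hP
      refine ⟨maximalIdeal V, (maximalIdeal.isMaximal _).isPrime, ?_⟩
      rw [hmax, hu1 P hP]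

/-- Compactness: one valuation subring hits the whole chain below `M`. -/
lemma exists_valuation_chain (φ : A →+* K) (hinj : Function.Injective φ)
    (M : Ideal A) (hM : M.IsPrime)
    (hchain : ∀ P Q : Ideal A, P.IsPrime → Q.IsPrime → P ≤ M → Q ≤ M → P ≤ Q ∨ Q ≤ P) :
    ∃ (V : ValuationSubring K) (_ : ∀ a : A, φ a ∈ V),
      ∀ P : Ideal A, P.IsPrime → P ≤ M →
        ∀ a ∉ P, ∀ (n k : ℕ) (p : Fin k → A) (v : Fin k → K),
          (∀ j, p j ∈ P) → (∀ j, v j ∈ V) → φ a ^ n ≠ ∑ j, φ (p j) * v j := by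
  classical
  have hcl : ∀ (x : K) (b : Bool), IsClosed {f : K → Bool | f x = b} := by
    intro x b
    have he : {f : K → Bool | f x = b} = (fun f : K → Bool => f x) ⁻¹' {b} := by
      ext f; simp
    rw [he]
    exact (isClosed_discrete {b}).preimage (continuous_apply x)
  have himp2 : ∀ (x y z : K), IsClosed {f : K → Bool | f x = true → f y = true → f z = true} := by
    intro x y z
    have he : {f : K → Bool | f x = true → f y = true → f z = true}
        = {f : K → Bool | f x = false} ∪ ({f : K → Bool | f y = false}
          ∪ {f : K → Bool | f z = true}) := by
      ext f
      simp only [Set.mem_setOf_eq, Set.mem_union]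
      cases hfx : f x <;> cases hfy : f y <;> cases hfz : f z <;> simp
    rw [he]
    exact (hcl x false).union ((hcl y false).union (hcl z true))
  have himp1 : ∀ (x z : K), IsClosed {f : K → Bool | f x = true → f z = true} := by
    intro x z
    have he : {f : K → Bool | f x = true → f z = true}
        = {f : K → Bool | f x = false} ∪ {f : K → Bool | f z = true} := by
      ext f
      simp only [Set.mem_setOf_eq, Set.mem_union]
      cases hfx : f x <;> cases hfz : f z <;> simp
    rw [he]
    exact (hcl x false).union (hcl z true)
  set s1 : Set (K → Bool) := {f | ∀ a : A, f (φ a) = true} with hs1def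
  set s2 : Set (K → Bool) := {f | ∀ x y : K, f x = true → f y = true → f (x + y) = true}
    with hs2def
  set s3 : Set (K → Bool) := {f | ∀ x y : K, f x = true → f y = true → f (x * y) = true}
    with hs3def
  set s4 : Set (K → Bool) := {f | ∀ x : K, f x = true → f (-x) = true} with hs4def
  set s5 : Set (K → Bool) := {f | ∀ x : K, f x = true ∨ f x⁻¹ = true} with hs5def
  have hs1 : IsClosed s1 := by
    have he : s1 = ⋂ a : A, {f : K → Bool | f (φ a) = true} := by
      ext f; simp [hs1def]
    rw [he]; exact isClosed_iInter fun a => hcl _ _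
  have hs2 : IsClosed s2 := by
    have he : s2 = ⋂ x : K, ⋂ y : K,
        {f : K → Bool | f x = true → f y = true → f (x + y) = true} := by
      ext f; simp [hs2def]
    rw [he]; exact isClosed_iInter fun x => isClosed_iInter fun y => himp2 _ _ _
  have hs3 : IsClosed s3 := by
    have he : s3 = ⋂ x : K, ⋂ y : K,
        {f : K → Bool | f x = true → f y = true → f (x * y) = true} := by
      ext f; simp [hs3def]
    rw [he]; exact isClosed_iInter fun x => isClosed_iInter fun y => himp2 _ _ _
  have hs4 : IsClosed s4 := by
    have he : s4 = ⋂ x : K, {f : K → Bool | f x = true → f (-x) = true} := by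
      ext f; simp [hs4def]
    rw [he]; exact isClosed_iInter fun x => himp1 _ _
  have hs5 : IsClosed s5 := by
    have he : s5 = ⋂ x : K, ({f : K → Bool | f x = true} ∪ {f : K → Bool | f x⁻¹ = true}) := by
      ext f; simp [hs5def]
    rw [he]; exact isClosed_iInter fun x => (hcl x true).union (hcl x⁻¹ true)
  set s : Set (K → Bool) := s1 ∩ (s2 ∩ (s3 ∩ (s4 ∩ s5))) with hsdef
  have hscl : IsClosed s := hs1.inter (hs2.inter (hs3.inter (hs4.inter hs5)))
  set t : {P : Ideal A // P.IsPrime ∧ P ≤ M} → Set (K → Bool) := fun i =>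
    {f | ∀ a : A, a ∉ i.1 → ∀ (n k : ℕ) (p : Fin k → A) (v : Fin k → K),
      (∀ j, p j ∈ i.1) → (∀ j, f (v j) = true) → φ a ^ n ≠ ∑ j, φ (p j) * v j} with htdef
  have htcl : ∀ i, IsClosed (t i) := by
    intro i
    have he : t i = ⋂ (a : A), ⋂ (n : ℕ), ⋂ (k : ℕ), ⋂ (p : Fin k → A), ⋂ (v : Fin k → K),
        {f : K → Bool | (∀ j, f (v j) = true) →
          (a ∉ i.1 → (∀ j, p j ∈ i.1) → φ a ^ n ≠ ∑ j, φ (p j) * v j)} := by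
      ext f
      simp only [htdef, Set.mem_setOf_eq, Set.mem_iInter]
      constructor
      · intro hf a n k p v hv ha hp
        exact hf a ha n k p v hp hv
      · intro hf a ha n k p v hp hv
        exact hf a n k p v hv ha hp
    rw [he]
    refine isClosed_iInter fun a => isClosed_iInter fun n => isClosed_iInter fun k =>
      isClosed_iInter fun p => isClosed_iInter fun v => ?_
    by_cases hC : a ∉ i.1 → (∀ j, p j ∈ i.1) → φ a ^ n ≠ ∑ j, φ (p j) * v j
    · have he2 : {f : K → Bool | (∀ j, f (v j) = true) →
          (a ∉ i.1 → (∀ j, p j ∈ i.1) → φ a ^ n ≠ ∑ j, φ (p j) * v j)} = Set.univ := by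
        ext f; simp only [Set.mem_setOf_eq, Set.mem_univ, iff_true]
        intro _; exact hC
      rw [he2]; exact isClosed_univ
    · have he2 : {f : K → Bool | (∀ j, f (v j) = true) →
          (a ∉ i.1 → (∀ j, p j ∈ i.1) → φ a ^ n ≠ ∑ j, φ (p j) * v j)}
          = ⋃ j, {f : K → Bool | f (v j) = false} := by
        ext f
        simp only [Set.mem_setOf_eq, Set.mem_iUnion]
        constructor
        · intro hf
          by_contra hno
          push_neg at hno
          simp only [Bool.not_eq_false] at hno
          exact hC (hf hno)
        · rintro ⟨j, hj⟩ hall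
          rw [hall j] at hj
          exact absurd hj (by simp)
      rw [he2]
      exact isClosed_iUnion_of_finite fun j => hcl _ false
  haveI : CompactSpace (K → Bool) := by infer_instance
  have hscomp : IsCompact s := hscl.isCompact
  have hnon : (s ∩ ⋂ i, t i).Nonempty := by
    rw [Set.nonempty_iff_ne_empty]
    intro hempty
    obtain ⟨u, hu⟩ := hscomp.elim_finite_subfamily_closed t htcl hempty
    set u' : Finset (Ideal A) := insert M (u.image fun i => i.1) with hu'def
    have hne' : u'.Nonempty := ⟨M, Finset.mem_insert_self _ _⟩
    have hmem' : ∀ P ∈ u', P.IsPrime ∧ P ≤ M := by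
      intro P hP
      rcases Finset.mem_insert.mp hP with rfl | hPi
      · exact ⟨hM, le_rfl⟩
      · obtain ⟨i, _, rfl⟩ := Finset.mem_image.mp hPi
        exact i.2
    obtain ⟨V, h, T, hTmem, hTtop, hmaxV, hpr⟩ :=
      exists_valuation_finset φ hinj u'.card u' rfl hne'
        (fun P hP => (hmem' P hP).1)
        (fun P hP Q hQ => hchain P Q (hmem' P hP).1 (hmem' Q hQ).1 (hmem' P hP).2 (hmem' Q hQ).2)
    set f : K → Bool := fun x => decide (x ∈ V) with hfdef
    have hfV : ∀ x : K, f x = true ↔ x ∈ V := by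
      intro x; simp [hfdef]
    have hfs : f ∈ s := by
      refine ⟨fun a => (hfV _).mpr (h a), fun x y hx hy => ?_, fun x y hx hy => ?_,
        fun x hx => ?_, fun x => ?_⟩
      · exact (hfV _).mpr (V.add_mem _ _ ((hfV _).mp hx) ((hfV _).mp hy))
      · exact (hfV _).mpr (V.mul_mem _ _ ((hfV _).mp hx) ((hfV _).mp hy))
      · exact (hfV _).mpr (V.neg_mem _ ((hfV _).mp hx))
      · rcases V.mem_or_inv_mem x with hm | hm
        · exact Or.inl ((hfV _).mpr hm)
        · exact Or.inr ((hfV _).mpr hm)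
    have hft : f ∈ ⋂ i ∈ u, t i := by
      refine Set.mem_iInter₂.mpr fun i hi => ?_
      intro a ha n k p v hp hv heq
      have hPu' : i.1 ∈ u' := Finset.mem_insert.mpr (Or.inr (Finset.mem_image_of_mem _ hi))
      obtain ⟨Q, hQp, hQc⟩ := hpr i.1 hPu'
      set z : V := resHom φ V h a with hzdef
      have hzn : z ^ n ∈ Q := by
        have hco : ((z ^ n : V) : K)
            = ((∑ j, resHom φ V h (p j) * ⟨v j, (hfV _).mp (hv j)⟩ : V) : K) := by
          push_cast
          exact heq
        rw [Subtype.ext hco]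
        refine Ideal.sum_mem _ fun j _ => Ideal.mul_mem_right _ _ ?_
        have : p j ∈ Q.comap (resHom φ V h) := by rw [hQc]; exact hp j
        exact this
      have haP : a ∈ i.1 := by
        rw [← hQc]
        exact hQp.mem_of_pow_mem n hzn
      exact ha haP
    have hmem2 : f ∈ s ∩ ⋂ i ∈ u, t i := ⟨hfs, hft⟩
    rw [hu] at hmem2
    exact hmem2
  obtain ⟨f, hfs, hft⟩ := hnon
  obtain ⟨hf1, hf2, hf3, hf4, hf5⟩ := hfs
  let S : Subring K :=
    { carrier := {x | f x = true}
      one_mem' := by have := hf1 1; simpa using this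
      mul_mem' := fun hx hy => hf3 _ _ hx hy
      zero_mem' := by have := hf1 0; simpa using this
      add_mem' := fun hx hy => hf2 _ _ hx hy
      neg_mem' := fun hx => hf4 _ hx }
  refine ⟨⟨S, hf5⟩, fun a => hf1 a, ?_⟩
  intro P hP hPM a ha n k p v hp hv heq
  have hmem3 := Set.mem_iInter.mp hft ⟨P, hP, hPM⟩
  exact hmem3 a ha n k p v hp (fun j => hv j) heq

lemma radical_isPrime_of_valuationRing {R : Type*} [CommRing R] [IsDomain R] [ValuationRing R]
    {I : Ideal R} (h : I.radical ≠ ⊤) : I.radical.IsPrime := by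
  refine ⟨h, ?_⟩
  intro x y hxy
  obtain ⟨n, hn⟩ := Ideal.mem_radical_iff.mp hxy
  obtain ⟨c, hc | hc⟩ := ValuationRing.cond x y
  · right
    refine Ideal.mem_radical_iff.mpr ⟨2 * n, ?_⟩
    have hy2 : y ^ 2 = x * y * c := by rw [← hc]; ring
    have he : y ^ (2 * n) = (x * y) ^ n * c ^ n := by
      rw [pow_mul, hy2, mul_pow]
    rw [he]
    exact Ideal.mul_mem_right _ _ hn
  · left
    refine Ideal.mem_radical_iff.mpr ⟨2 * n, ?_⟩
    have hx2 : x ^ 2 = x * y * c := by rw [← hc]; ring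
    have he : x ^ (2 * n) = (x * y) ^ n * c ^ n := by
      rw [pow_mul, hx2, mul_pow]
    rw [he]
    exact Ideal.mul_mem_right _ _ hn

lemma ideal_le_total_of_valuationRing {R : Type*} [CommRing R] [IsDomain R] [ValuationRing R]
    (I J : Ideal R) : I ≤ J ∨ J ≤ I := by
  by_cases h : I ≤ J
  · exact Or.inl h
  · right
    obtain ⟨x, hxI, hxJ⟩ := SetLike.not_le_iff_exists.mp h
    intro y hy
    obtain ⟨c, hc | hc⟩ := ValuationRing.cond x y
    · rw [← hc]; exact Ideal.mul_mem_right _ _ hxI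
    · exact absurd (hc ▸ Ideal.mul_mem_right c _ hy) hxJ

lemma valuationRing_of_ringEquiv {R S : Type*} [CommRing R] [IsDomain R] [CommRing S]
    [IsDomain S] [ValuationRing S] (e : R ≃+* S) : ValuationRing R := by
  refine { cond' := fun a b => ?_ }
  obtain ⟨c, hc | hc⟩ := ValuationRing.cond (e a) (e b)
  · exact ⟨e.symm c, Or.inl (e.injective (by rw [map_mul, RingEquiv.apply_symm_apply, hc]))⟩
  · exact ⟨e.symm c, Or.inr (e.injective (by rw [map_mul, RingEquiv.apply_symm_apply, hc]))⟩

/-- The main construction: a valuation overring whose spectrum covers all primes below `M`,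
with maximal ideal lying over `M`. -/
lemma exists_good_valuation (φ : A →+* K) (hinj : Function.Injective φ)
    (M : Ideal A) (hM : M.IsPrime)
    (hchain : ∀ P Q : Ideal A, P.IsPrime → Q.IsPrime → P ≤ M → Q ≤ M → P ≤ Q ∨ Q ≤ P) :
    ∃ (W : ValuationSubring K) (h : ∀ a, φ a ∈ W),
      (maximalIdeal W).comap (resHom φ W h) = M ∧
      ∀ P : Ideal A, P.IsPrime → P ≤ M →
        ∃ Q : Ideal W, Q.IsPrime ∧ Q.comap (resHom φ W h) = P := by
  classical
  obtain ⟨V, hV, hX⟩ := exists_valuation_chain φ hinj M hM hchain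
  -- the span ideals and their radicals
  set J : Ideal A → Ideal V := fun P => Ideal.span ((resHom φ V hV) '' (P : Set A)) with hJdef
  have hnot : ∀ (P : Ideal A), P.IsPrime → P ≤ M → ∀ a ∉ P, ∀ n : ℕ,
      (resHom φ V hV a) ^ n ∉ J P := by
    intro P hP hPM a ha n hmem
    have hmem' : (resHom φ V hV a) ^ n
        ∈ Submodule.span (V : Type _) ((resHom φ V hV) '' (P : Set A)) := by
      rw [Ideal.submodule_span_eq]; exact hmem
    obtain ⟨k, c, g, hsum⟩ := Submodule.mem_span_set'.mp hmem' 
    have hpex : ∀ j : Fin k, ∃ p : A, p ∈ P ∧ resHom φ V hV p = (g j : V) := by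
      intro j
      obtain ⟨p, hp1, hp2⟩ := (g j).2
      exact ⟨p, hp1, hp2⟩
    choose p hp1 hp2 using hpex
    refine hX P hP hPM a ha n k p (fun j => ((c j : V) : K)) hp1 (fun j => (c j).2) ?_
    have hcoe : V.subtype (∑ i, c i • (g i : V)) = V.subtype ((resHom φ V hV a) ^ n) :=
      congrArg _ hsum
    rw [map_sum, map_pow] at hcoe
    have hterm : ∀ i, V.subtype (c i • (g i : V)) = φ (p i) * ((c i : V) : K) := by
      intro i
      have hsm : (c i • (g i : V)) = c i * (g i : V) := rfl
      rw [hsm, map_mul, ← hp2 i]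
      show ((c i : V) : K) * ((resHom φ V hV (p i) : V) : K) = _
      rw [resHom_coe]
      ring
    rw [Finset.sum_congr rfl (fun i _ => hterm i)] at hcoe
    exact hcoe.symm
  have hradne : ∀ (P : Ideal A), P.IsPrime → P ≤ M → (J P).radical ≠ ⊤ := by
    intro P hP hPM htop
    have h1 : (1 : V) ∈ (J P).radical := htop ▸ Submodule.mem_top
    obtain ⟨n, hn⟩ := Ideal.mem_radical_iff.mp h1
    have h2 := hnot P hP hPM 1
      (fun h1P => hP.ne_top (Ideal.eq_top_of_isUnit_mem _ h1P isUnit_one)) n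
    apply h2
    simpa using hn
  have hradp : ∀ (P : Ideal A), P.IsPrime → P ≤ M → ((J P).radical).IsPrime :=
    fun P hP hPM => radical_isPrime_of_valuationRing (hradne P hP hPM)
  have hradc : ∀ (P : Ideal A), P.IsPrime → P ≤ M →
      ((J P).radical).comap (resHom φ V hV) = P := by
    intro P hP hPM
    ext a
    rw [Ideal.mem_comap]
    constructor
    · intro hmem
      by_contra ha
      obtain ⟨n, hn⟩ := Ideal.mem_radical_iff.mp hmem
      exact hnot P hP hPM a ha n hn
    · intro haP
      exact Ideal.le_radical (Ideal.subset_span ⟨a, haP, rfl⟩)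
  haveI hQM : ((J M).radical).IsPrime := hradp M hM le_rfl
  set W : ValuationSubring K := V.ofPrime ((J M).radical) with hWdef
  have hVW : V ≤ W := ValuationSubring.le_ofPrime V ((J M).radical)
  have hw : ∀ a, φ a ∈ W := fun a => hVW (hV a)
  have hcompat : resHom φ W hw = (algebraMap V W).comp (resHom φ V hV) := by
    refine RingHom.ext fun a => Subtype.ext ?_
    have h2 : (algebraMap V K) (resHom φ V hV a)
        = (algebraMap W K) ((algebraMap V W) (resHom φ V hV a)) :=
      IsScalarTower.algebraMap_apply V W K _
    simpa using h2
  have hloc : IsLocalization.AtPrime W ((J M).radical) := V.ofPrime_localization _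
  refine ⟨W, hw, ?_, ?_⟩
  · have h1 : (maximalIdeal W).comap (algebraMap V W) = (J M).radical :=
      IsLocalization.AtPrime.comap_maximalIdeal _ _
    rw [hcompat, ← Ideal.comap_comap, h1]
    exact hradc M hM le_rfl
  · intro P hP hPM
    haveI hQP : ((J P).radical).IsPrime := hradp P hP hPM
    have hle : (J P).radical ≤ (J M).radical :=
      Ideal.radical_mono (Ideal.span_mono (Set.image_mono hPM))
    have hdisj : Disjoint ((((J M).radical).primeCompl : Submonoid V) : Set V)
        (((J P).radical : Ideal V) : Set V) := by
      rw [Set.disjoint_left]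
      intro x hx1 hx2
      exact hx1 (hle hx2)
    set eiso := IsLocalization.orderIsoOfPrime (((J M).radical).primeCompl) W
    set QW := (eiso.symm ⟨(J P).radical, hQP, hdisj⟩).1 with hQWdef
    have hQWp : QW.IsPrime := (eiso.symm ⟨(J P).radical, hQP, hdisj⟩).2
    have hQWc : QW.comap (algebraMap V W) = (J P).radical := by
      have := congrArg Subtype.val (eiso.apply_symm_apply ⟨(J P).radical, hQP, hdisj⟩)
      exact this
    refine ⟨QW, hQWp, ?_⟩
    rw [hcompat, ← Ideal.comap_comap, hQWc]
    exact hradc P hP hPM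

universe u

/-- Flatness gives factorizations of division relations. -/
lemma exists_factor_of_flat {R : Type u} [CommRing R] {Mod : Type u} [CommRing Mod]
    [Algebra R Mod] [Module.Flat R Mod] (s a : R) (z : Mod) (hrel : s • z = a • (1 : Mod)) :
    ∃ (κ : Type u) (_ : Fintype κ) (c d : κ → R) (y : κ → Mod),
      (∀ j, s * c j = a * d j) ∧ (1 : Mod) = ∑ j, d j • y j := by
  classical
  set f2 : ULift.{u} (Fin 2) → R := fun i => if i.down = 0 then s else -a with hf2
  set x2 : ULift.{u} (Fin 2) → Mod := fun i => if i.down = 0 then z else 1 with hx2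
  have hsum : ∀ (G : Type u) (_ : AddCommMonoid G) (F : ULift.{u} (Fin 2) → G),
      ∑ i, F i = F (ULift.up 0) + F (ULift.up 1) := by
    intro G _ F
    have h1 : ∑ i : Fin 2, F (ULift.up i) = ∑ i : ULift.{u} (Fin 2), F i :=
      Fintype.sum_equiv Equiv.ulift.symm _ _ (fun x => rfl)
    rw [← h1, Fin.sum_univ_two]
  have hrel2 : ∑ i, f2 i • x2 i = 0 := by
    rw [hsum _ _ (fun i => f2 i • x2 i)]
    simp only [hf2, hx2]
    norm_num
    rw [hrel]
    simp
  obtain ⟨k, amat, y, hxy, hfa⟩ :=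
    Module.Flat.isTrivialRelation_of_sum_smul_eq_zero (f := f2) (x := x2) (by exact hrel2)
  refine ⟨ULift.{u} (Fin k), inferInstance, fun j => amat (ULift.up 0) j.down,
    fun j => amat (ULift.up 1) j.down, fun j => y j.down, ?_, ?_⟩
  · intro j
    have hj := hfa j.down
    rw [hsum _ _ (fun i => f2 i * amat i j.down)] at hj
    simp only [hf2] at hj
    norm_num at hj
    linear_combination hj
  · have := hxy (ULift.up 1)
    have h1 : ∑ j : ULift.{u} (Fin k), amat (ULift.up 1) j.down • y j.down
        = ∑ j : Fin k, amat (ULift.up 1) j • y j :=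
      Fintype.sum_equiv Equiv.ulift _ _ (fun x => rfl)
    rw [h1]
    simpa [hx2] using this

end TPaux


/-- A treed perinormal domain is a Prüfer domain. -/
theorem treed_perinormal_pruefer (A : Type*) [CommRing A] [IsDomain A]
    (htreed : Treed A) (hperi : Perinormal A) : IsPrueferDom A := by
  classical
  intro M hM
  haveI hMp : M.IsPrime := hM.isPrime
  set φ : A →+* FractionRing A := algebraMap A (FractionRing A) with hφdef
  have hinj : Function.Injective φ := IsFractionRing.injective A (FractionRing A)
  have hchain : ∀ P Q : Ideal A, P.IsPrime → Q.IsPrime → P ≤ M → Q ≤ M → P ≤ Q ∨ Q ≤ P := by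
    intro P Q hP hQ hPM hQM
    by_contra hc
    push_neg at hc
    have h1 := htreed P Q hP hQ hc.1 hc.2
    have h2 : (⊤ : Ideal A) ≤ M := h1 ▸ sup_le hPM hQM
    exact hM.ne_top (top_le_iff.mp h2)
  obtain ⟨W, hw, hmaxW, hprimesW⟩ := TPaux.exists_good_valuation φ hinj M hMp hchain
  set B : Subalgebra A (FractionRing A) :=
    { W.toSubring.toSubsemiring with algebraMap_mem' := hw } with hBdef
  set e : B ≃+* W :=
    { toFun := fun x => ⟨x.1, x.2⟩
      invFun := fun x => ⟨x.1, x.2⟩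
      left_inv := fun x => rfl
      right_inv := fun x => rfl
      map_mul' := fun x y => rfl
      map_add' := fun x y => rfl } with hedef
  have healg : ∀ a : A, e (algebraMap A B a) = TPaux.resHom φ W hw a := fun a => Subtype.ext rfl
  have hunitBW : ∀ x : B, IsUnit x ↔ IsUnit (e x) := by
    intro x
    constructor
    · exact fun h => h.map e
    · intro h
      have h2 := h.map e.symm
      rwa [RingEquiv.symm_apply_apply] at h2
  haveI hvrB : ValuationRing B := TPaux.valuationRing_of_ringEquiv e
  haveI hlocB : IsLocalRing B := ValuationRing.isLocalRing B
  have hmemmax : ∀ x : B, x ∈ IsLocalRing.maximalIdeal B ↔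
      e x ∈ IsLocalRing.maximalIdeal W := by
    intro x
    rw [IsLocalRing.mem_maximalIdeal, IsLocalRing.mem_maximalIdeal,
      mem_nonunits_iff, mem_nonunits_iff]
    exact not_congr (hunitBW x)
  have hmaxB : (IsLocalRing.maximalIdeal B).comap (algebraMap A B) = M := by
    ext a
    rw [Ideal.mem_comap, hmemmax, healg a, ← hmaxW]
    rfl
  have hcompB : e.toRingHom.comp (algebraMap A B) = TPaux.resHom φ W hw :=
    RingHom.ext fun a => healg a
  have hprimesB : ∀ P : Ideal A, P.IsPrime → P ≤ M →
      ∃ Q : Ideal B, Q.IsPrime ∧ Q.comap (algebraMap A B) = P := by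
    intro P hP hPM
    obtain ⟨Qw, hQwp, hQwc⟩ := hprimesW P hP hPM
    haveI := hQwp
    refine ⟨Qw.comap e.toRingHom, Ideal.IsPrime.comap _, ?_⟩
    rw [Ideal.comap_comap, hcompB, hQwc]
  have hgd : GoingDownOverring A B := by
    intro P' P hP' hP hle Q hQ hQc
    have hQle : Q ≤ IsLocalRing.maximalIdeal B := IsLocalRing.le_maximalIdeal hQ.ne_top
    have hPM : P ≤ M := by
      rw [← hQc, ← hmaxB]
      exact Ideal.comap_mono hQle
    obtain ⟨Q'', hQ''p, hQ''c⟩ := hprimesB P' hP' (hle.trans hPM)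
    rcases TPaux.ideal_le_total_of_valuationRing Q'' Q with hh | hh
    · exact ⟨Q'', hQ''p, hh, hQ''c⟩
    · refine ⟨Q, hQ, le_rfl, ?_⟩
      have hPP' : P ≤ P' := by
        rw [← hQc, ← hQ''c]
        exact Ideal.comap_mono hh
      rw [hQc]
      exact le_antisymm hPP' hle
  have hflat : Module.Flat A B := hperi B hgd
  haveI hisloc : IsLocalization M.primeCompl B := by
    refine { map_units := ?_, surj := ?_, exists_of_eq := ?_ }
    · intro y
      by_contra hnu
      have h1 : algebraMap A B y ∈ IsLocalRing.maximalIdeal B := by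
        rw [IsLocalRing.mem_maximalIdeal]
        exact hnu
      have h2 : (y : A) ∈ (IsLocalRing.maximalIdeal B).comap (algebraMap A B) := h1
      rw [hmaxB] at h2
      exact y.2 h2
    · intro z
      obtain ⟨a, s, hs, hdiv⟩ := IsFractionRing.div_surjective (A := A) (z : FractionRing A)
      have hs0 : φ s ≠ 0 := by
        intro h0
        have h1 : s = 0 := hinj (by simpa using h0)
        exact nonZeroDivisors.ne_zero hs h1
      have hzs : s • z = a • (1 : B) := by
        apply Subtype.ext
        rw [SetLike.val_smul, SetLike.val_smul, Algebra.smul_def, Algebra.smul_def]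
        rw [show ((1 : B) : FractionRing A) = 1 from rfl, mul_one, ← hdiv]
        field_simp
        exact mul_div_cancel_left₀ _ hs0
      obtain ⟨κ, hκ, c, d, y, hcd, hone⟩ := TPaux.exists_factor_of_flat s a z hzs
      have hex : ∃ j, d j • y j ∉ IsLocalRing.maximalIdeal B := by
        by_contra hall
        push_neg at hall
        have h1 : (1 : B) ∈ IsLocalRing.maximalIdeal B := by
          rw [hone]; exact Ideal.sum_mem _ fun j _ => hall j
        exact (IsLocalRing.maximalIdeal.isMaximal B).ne_top
          (Ideal.eq_top_of_isUnit_mem _ h1 isUnit_one)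
      obtain ⟨j0, hj0⟩ := hex
      have hd : d j0 ∉ M := by
        intro hdM
        apply hj0
        rw [Algebra.smul_def]
        refine Ideal.mul_mem_right _ _ ?_
        have h2 : d j0 ∈ (IsLocalRing.maximalIdeal B).comap (algebraMap A B) := by
          rw [hmaxB]; exact hdM
        exact h2
      refine ⟨(c j0, ⟨d j0, hd⟩), ?_⟩
      apply Subtype.ext
      have hval : ∀ b : A, ((algebraMap A B b : B) : FractionRing A) = φ b := fun b => rfl
      rw [show ((z * algebraMap A B (d j0) : B) : FractionRing A)
          = (z : FractionRing A) * φ (d j0) from by rw [← hval (d j0)]; rfl]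
      rw [hval, ← hdiv]
      have hc := congrArg φ (hcd j0)
      rw [map_mul, map_mul] at hc
      field_simp
      rw [← hφdef]
      have hsinv : φ s * (φ s)⁻¹ = 1 := mul_inv_cancel₀ hs0
      linear_combination (-(φ s)⁻¹) * hc + φ (c j0) * hsinv
    · intro x y hxy
      refine ⟨1, ?_⟩
      have h1 : φ x = φ y := congrArg Subtype.val hxy
      rw [hinj h1]
  haveI : IsDomain (Localization.AtPrime M) :=
    IsLocalization.isDomain_localization M.primeCompl_le_nonZeroDivisors
  have ealg := IsLocalization.algEquiv M.primeCompl (Localization.AtPrime M) B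
  exact ⟨hMp, TPaux.valuationRing_of_ringEquiv ealg.toRingEquiv⟩
end

section
/- A treed P-domain is a Prüfer domain. -/
open scoped nonZeroDivisors

open scoped nonZeroDivisors

section Aux

variable {A : Type*} [CommRing A] [IsDomain A]

lemma aux_dvd_loc (P : Ideal A) [P.IsPrime] {a b s : A} (hs : s ∉ P)
    (h : s * b ∈ Ideal.span ({a} : Set A)) :
    algebraMap A (Localization.AtPrime P) a ∣ algebraMap A (Localization.AtPrime P) b := by
  obtain ⟨c, hc⟩ := Ideal.mem_span_singleton'.mp h
  have hu : IsUnit (algebraMap A (Localization.AtPrime P) s) :=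
    IsLocalization.map_units (Localization.AtPrime P) (⟨s, hs⟩ : P.primeCompl)
  rw [← hu.dvd_mul_right]
  refine ⟨algebraMap A _ c, ?_⟩
  rw [← map_mul, ← map_mul]
  exact congrArg _ (by linear_combination -hc)

lemma aux_no_valued (Q : Ideal A) (hQp : Q.IsPrime)
    (hval : ValuationRing (Localization.AtPrime Q)) (a b : A)
    (h1 : (Ideal.span {a}).colon (Ideal.span {b}) ≤ Q)
    (h2 : (Ideal.span {b}).colon (Ideal.span {a}) ≤ Q) : False := by
  haveI := hQp
  set f := algebraMap A (Localization.AtPrime Q) with hf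
  have hinj : Function.Injective f :=
    IsLocalization.injective _ (Ideal.primeCompl_le_nonZeroDivisors Q)
  obtain ⟨c, hc⟩ := ValuationRing.cond (f a) (f b)
  obtain ⟨⟨n, d⟩, hd⟩ := IsLocalization.surj Q.primeCompl c
  rcases hc with hc | hc
  · have : f (a * n) = f (b * d) := by
      rw [map_mul, map_mul, ← hd, ← mul_assoc, hc]
    have h := hinj this
    have : (d : A) ∈ (Ideal.span {a}).colon (Ideal.span {b}) := by
      rw [Ideal.mem_colon_span_singleton]
      exact Ideal.mem_span_singleton'.mpr ⟨n, by linear_combination h⟩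
    exact d.2 (h1 this)
  · have : f (b * n) = f (a * d) := by
      rw [map_mul, map_mul, ← hd, ← mul_assoc, hc]
    have h := hinj this
    have : (d : A) ∈ (Ideal.span {b}).colon (Ideal.span {a}) := by
      rw [Ideal.mem_colon_span_singleton]
      exact Ideal.mem_span_singleton'.mpr ⟨n, by linear_combination h⟩
    exact d.2 (h2 this)

end Aux

section Aux2
variable {A : Type*} [CommRing A] [IsDomain A]

theorem aux_main (htreed : Treed A) (hP : IsPDomain A) (M : Ideal A) (hM : M.IsMaximal)
    (a b : A) :
    algebraMap A (Localization.AtPrime M) a ∣ algebraMap A (Localization.AtPrime M) b ∨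
    algebraMap A (Localization.AtPrime M) b ∣ algebraMap A (Localization.AtPrime M) a := by
  haveI hMp : M.IsPrime := hM.isPrime
  by_cases h1 : (Ideal.span {a}).colon (Ideal.span {b}) ≤ M
  · by_cases h2 : (Ideal.span {b}).colon (Ideal.span {a}) ≤ M
    · exfalso
      obtain ⟨P, hPmin, hPM⟩ := Ideal.exists_minimalPrimes_le h1
      obtain ⟨Q, hQmin, hQM⟩ := Ideal.exists_minimalPrimes_le h2
      have hPp : P.IsPrime := hPmin.1.1
      have hQp : Q.IsPrime := hQmin.1.1
      have hsup : P ⊔ Q ≠ ⊤ := fun h => hM.ne_top (top_le_iff.mp (h ▸ sup_le hPM hQM))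
      by_cases hPQ : P ≤ Q
      · obtain ⟨hQp', hval⟩ := hP Q ⟨b, a, hQmin⟩
        exact aux_no_valued Q hQp' hval a b (le_trans hPmin.1.2 hPQ) hQmin.1.2
      · have hQP : Q ≤ P := by
          by_contra hQP
          exact hsup (htreed P Q hPp hQp hPQ hQP)
        obtain ⟨hPp', hval⟩ := hP P ⟨a, b, hPmin⟩
        exact aux_no_valued P hPp' hval a b hPmin.1.2 (le_trans hQmin.1.2 hQP)
    · right
      obtain ⟨s, hsI, hsM⟩ := SetLike.not_le_iff_exists.mp h2
      exact aux_dvd_loc M hsM (Ideal.mem_colon_span_singleton.mp hsI)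
  · left
    obtain ⟨s, hsI, hsM⟩ := SetLike.not_le_iff_exists.mp h1
    exact aux_dvd_loc M hsM (Ideal.mem_colon_span_singleton.mp hsI)

end Aux2

/-- A treed P-domain is a Prüfer domain. -/
theorem treed_pdomain_pruefer (A : Type*) [CommRing A] [IsDomain A]
    (htreed : Treed A) (hP : IsPDomain A) : IsPrueferDom A := by
  intro M hM
  haveI hMp : M.IsPrime := hM.isPrime
  refine ⟨hMp, ?_⟩
  haveI : IsDomain (Localization.AtPrime M) :=
    IsLocalization.isDomain_localization (Ideal.primeCompl_le_nonZeroDivisors M)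
  rw [ValuationRing.iff_dvd_total]
  constructor
  intro x y
  obtain ⟨⟨a, s⟩, hx⟩ := IsLocalization.surj M.primeCompl x
  obtain ⟨⟨b, t⟩, hy⟩ := IsLocalization.surj M.primeCompl y
  have hus : IsUnit (algebraMap A (Localization.AtPrime M) s) :=
    IsLocalization.map_units _ s
  have hut : IsUnit (algebraMap A (Localization.AtPrime M) t) :=
    IsLocalization.map_units _ t
  rcases aux_main htreed hP M hM a b with h | h
  · left
    have hxy : x ∣ y * algebraMap A (Localization.AtPrime M) (t : A) := by
      rw [hy]; exact dvd_trans ⟨_, hx.symm⟩ h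
    exact hut.dvd_mul_right.mp hxy
  · right
    have hyx : y ∣ x * algebraMap A (Localization.AtPrime M) (s : A) := by
      rw [hx]; exact dvd_trans ⟨_, hy.symm⟩ h
    exact hus.dvd_mul_right.mp hyx
end

section
/- A one-dimensional perinormal domain is a Prüfer domain. -/
open scoped nonZeroDivisors

section Aux

universe u

set_option maxHeartbeats 1000000 in
set_option synthInstance.maxHeartbeats 100000 in
/-- In a one-dimensional domain, every overring is a going down overring. -/
lemma aux_goingDown_of_dim_one {A : Type*} [CommRing A] [IsDomain A]
    (hdim : ∀ P : Ideal A, P.IsPrime → P ≠ ⊥ → P.IsMaximal)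
    (B : Subalgebra A (FractionRing A)) : GoingDownOverring A B := by
  intro P' P hP' hP hle Q hQ hQP
  by_cases h : P' = ⊥
  · subst h
    refine ⟨⊥, Ideal.bot_prime, bot_le, ?_⟩
    have hinj : Function.Injective (algebraMap A B) := by
      intro x y hxy
      apply IsFractionRing.injective A (FractionRing A)
      rw [IsScalarTower.algebraMap_apply A B (FractionRing A),
        IsScalarTower.algebraMap_apply A B (FractionRing A), hxy]
    rw [← RingHom.ker_eq_comap_bot]
    exact (RingHom.injective_iff_ker_eq_bot _).mp hinj
  · obtain rfl : P' = P := (hdim P' hP' h).eq_of_le hP.ne_top hle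
    exact ⟨Q, hQ, le_rfl, hQP⟩

private lemma aux_sum_ulift_two {N : Type*} [AddCommMonoid N]
    (g : ULift.{u} (Fin 2) → N) : ∑ i, g i = g ⟨0⟩ + g ⟨1⟩ := by
  rw [← Equiv.sum_comp (Equiv.ulift.symm : Fin 2 ≃ ULift.{u} (Fin 2)) g, Fin.sum_univ_two]
  rfl

set_option maxHeartbeats 1000000 in
set_option synthInstance.maxHeartbeats 100000 in
/-- The key consequence of flatness for an overring: every element `t` of a flat overring
admits a decomposition `1 = ∑ dⱼ yⱼ` with `dⱼ t` in the image of `A`. -/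
lemma aux_flat_overring_key {A : Type u} [CommRing A] [IsDomain A]
    (B : Subalgebra A (FractionRing A)) (hB : Module.Flat A B) (t : B) :
    ∃ (κ : Type u) (_ : Fintype κ) (c d : κ → A) (y : κ → B),
      (1 : FractionRing A) = ∑ j, algebraMap A (FractionRing A) (d j) * (y j : FractionRing A) ∧
      ∀ j, algebraMap A (FractionRing A) (d j) * (t : FractionRing A)
        = algebraMap A (FractionRing A) (c j) := by
  classical
  obtain ⟨⟨a, s⟩, hs⟩ := IsLocalization.surj A⁰ (t : FractionRing A)
  set f : ULift.{u} (Fin 2) → A := fun i => if i.down = 0 then (s : A) else a with hf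
  set x : ULift.{u} (Fin 2) → B := fun i => if i.down = 0 then t else -1 with hx
  have hf0 : f ⟨0⟩ = (s : A) := by simp [hf]
  have hf1 : f ⟨1⟩ = a := by norm_num [hf]
  have hx0 : x ⟨0⟩ = t := by simp [hx]
  have hx1 : x ⟨1⟩ = -1 := by norm_num [hx]
  have hrel : ∑ i, f i • x i = 0 := by
    apply Subtype.val_injective
    rw [aux_sum_ulift_two, hf0, hf1, hx0, hx1]
    push_cast [Algebra.smul_def]
    linear_combination hs
  obtain ⟨κ, _, aM, y, hxy, hfa⟩ : ∃ (κ : Type u) (_ : Fintype κ) (aM : ULift.{u} (Fin 2) → κ → A)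
      (y : κ → B), (∀ i, x i = ∑ j, aM i j • y j) ∧ ∀ j, ∑ i, f i * aM i j = 0 := by
    obtain ⟨k, a, y, h1, h2⟩ := Module.Flat.isTrivialRelation_of_sum_smul_eq_zero hrel
    exact ⟨ULift.{u} (Fin k), inferInstance, fun i j => a i j.down, fun j => y j.down,
      fun i => (h1 i).trans (Equiv.ulift.sum_comp (fun j => a i j • y j)).symm, fun j => h2 j.down⟩
  have hsK : algebraMap A (FractionRing A) (s : A) ≠ 0 :=
    IsFractionRing.to_map_ne_zero_of_mem_nonZeroDivisors s.2
  refine ⟨κ, ‹_›, fun j => aM ⟨0⟩ j, fun j => -(aM ⟨1⟩ j), y, ?_, ?_⟩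
  · have h1 : (-1 : B) = ∑ j, aM ⟨1⟩ j • y j := hx1 ▸ hxy ⟨1⟩
    have h1' := congrArg (Subtype.val) h1
    push_cast [Algebra.smul_def] at h1'
    have hneg : ∑ j, algebraMap A (FractionRing A) (-(aM ⟨1⟩ j)) * (y j : FractionRing A)
        = -∑ j, algebraMap A (FractionRing A) (aM ⟨1⟩ j) * (y j : FractionRing A) := by
      rw [← Finset.sum_neg_distrib]
      exact Finset.sum_congr rfl fun j _ => by rw [map_neg, neg_mul]
    show (1 : FractionRing A)
        = ∑ j, algebraMap A (FractionRing A) (-(aM ⟨1⟩ j)) * (y j : FractionRing A)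
    rw [hneg, ← h1']
    ring
  · intro j
    have h0 := hfa j
    rw [aux_sum_ulift_two, hf0, hf1] at h0
    -- h0 : ↑s * aM ⟨0⟩ j + a * aM ⟨1⟩ j = 0
    show algebraMap A (FractionRing A) (-(aM ⟨1⟩ j)) * (t : FractionRing A)
        = algebraMap A (FractionRing A) (aM ⟨0⟩ j)
    apply mul_left_cancel₀ hsK
    have hta : (t : FractionRing A) * algebraMap A (FractionRing A) (s : A)
        = algebraMap A (FractionRing A) a := hs
    have hca : a * -(aM ⟨1⟩ j) = (s : A) * aM ⟨0⟩ j := by linear_combination -h0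
    calc algebraMap A (FractionRing A) (s : A) *
          (algebraMap A (FractionRing A) (-(aM ⟨1⟩ j)) * (t : FractionRing A))
        = algebraMap A (FractionRing A) (-(aM ⟨1⟩ j)) *
            ((t : FractionRing A) * algebraMap A (FractionRing A) (s : A)) := by ring
      _ = algebraMap A (FractionRing A) (-(aM ⟨1⟩ j)) * algebraMap A (FractionRing A) a := by
            rw [hta]
      _ = algebraMap A (FractionRing A) (a * -(aM ⟨1⟩ j)) := by rw [map_mul]; ring
      _ = algebraMap A (FractionRing A) ((s : A) * aM ⟨0⟩ j) := by rw [hca]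
      _ = algebraMap A (FractionRing A) (s : A) * algebraMap A (FractionRing A) (aM ⟨0⟩ j) := by
            rw [map_mul]

end Aux

set_option maxHeartbeats 1000000 in
set_option synthInstance.maxHeartbeats 100000 in
/-- A one-dimensional perinormal domain is a Prüfer domain. -/
theorem one_dim_perinormal_pruefer (A : Type*) [CommRing A] [IsDomain A]
    (hdim : ∀ P : Ideal A, P.IsPrime → P ≠ ⊥ → P.IsMaximal)
    (hperi : Perinormal A) : IsPrueferDom A := by
  intro M hM
  haveI hMp : M.IsPrime := hM.isPrime
  obtain ⟨V, hV, hloc⟩ := IsLocalRing.exists_factor_valuationRing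
    (algebraMap (Localization.AtPrime M) (FractionRing A))
  refine ⟨hMp, ?_⟩
  rw [ValuationRing.iff_isInteger_or_isInteger (Localization.AtPrime M) (FractionRing A)]
  let B : Subalgebra A (FractionRing A) :=
    { V.toSubring.toSubsemiring with
      algebraMap_mem' := fun r => by
        have h1 : algebraMap A (FractionRing A) r
            = algebraMap (Localization.AtPrime M) (FractionRing A)
                (algebraMap A (Localization.AtPrime M) r) :=
          IsScalarTower.algebraMap_apply A (Localization.AtPrime M) (FractionRing A) r
        exact h1 ▸ hV (algebraMap A (Localization.AtPrime M) r) }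
  have hBV : ∀ z : FractionRing A, z ∈ B ↔ z ∈ V := fun z => Iff.rfl
  have hflat : Module.Flat A B := hperi B (aux_goingDown_of_dim_one hdim B)
  have hVrange : ∀ z : FractionRing A, z ∈ V →
      IsLocalization.IsInteger (Localization.AtPrime M) z := by
    intro z hz
    obtain ⟨κ, _, c, d, y, h1, h2⟩ := aux_flat_overring_key B hflat ⟨z, (hBV z).mpr hz⟩
    have hex : ∃ j, d j ∉ M := by
      by_contra hcon
      push_neg at hcon
      haveI : IsLocalRing V.toSubring := V.isLocalRing
      set g := (algebraMap (Localization.AtPrime M) (FractionRing A)).codRestrict V.toSubring hV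
        with hg
      have hone : (1 : V.toSubring) = ∑ j,
          g (algebraMap A (Localization.AtPrime M) (d j)) * ⟨(y j : FractionRing A), (y j).2⟩ := by
        apply Subtype.val_injective
        push_cast [hg]
        simp only [RingHom.codRestrict_apply,
          ← IsScalarTower.algebraMap_apply A (Localization.AtPrime M) (FractionRing A)]
        exact h1
      have hmem : (1 : V.toSubring) ∈ IsLocalRing.maximalIdeal V.toSubring := by
        rw [hone]
        refine Ideal.sum_mem _ fun j _ => Ideal.mul_mem_right _ _ ?_
        rw [IsLocalRing.mem_maximalIdeal, mem_nonunits_iff]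
        intro hunit
        have := hloc.map_nonunit _ hunit
        rw [IsLocalization.AtPrime.isUnit_to_map_iff (Localization.AtPrime M) M] at this
        exact this (hcon j)
      exact (Ideal.ne_top_iff_one _).mp
        (IsLocalRing.maximalIdeal.isMaximal V.toSubring).ne_top hmem
    obtain ⟨j, hj⟩ := hex
    have hd : IsUnit (algebraMap A (Localization.AtPrime M) (d j)) :=
      (IsLocalization.AtPrime.isUnit_to_map_iff (Localization.AtPrime M) M (d j)).mpr hj
    obtain ⟨u, hu⟩ := hd
    refine ⟨algebraMap A (Localization.AtPrime M) (c j) * ↑u⁻¹, ?_⟩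
    have hdj0 : d j ≠ 0 := fun h => hj (h ▸ M.zero_mem)
    have hdK : algebraMap A (FractionRing A) (d j) ≠ 0 :=
      (map_ne_zero_iff _ (IsFractionRing.injective A (FractionRing A))).mpr hdj0
    apply mul_left_cancel₀ hdK
    have key : algebraMap A (Localization.AtPrime M) (d j) *
        (algebraMap A (Localization.AtPrime M) (c j) * ↑u⁻¹)
        = algebraMap A (Localization.AtPrime M) (c j) := by
      rw [← hu, mul_left_comm, Units.mul_inv, mul_one]
    calc algebraMap A (FractionRing A) (d j) *
          algebraMap (Localization.AtPrime M) (FractionRing A)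
            (algebraMap A (Localization.AtPrime M) (c j) * ↑u⁻¹)
        = algebraMap (Localization.AtPrime M) (FractionRing A)
            (algebraMap A (Localization.AtPrime M) (d j) *
              (algebraMap A (Localization.AtPrime M) (c j) * ↑u⁻¹)) := by
          simp only [map_mul, ← IsScalarTower.algebraMap_apply]
      _ = algebraMap (Localization.AtPrime M) (FractionRing A)
            (algebraMap A (Localization.AtPrime M) (c j)) := by rw [key]
      _ = algebraMap A (FractionRing A) (c j) :=
          (IsScalarTower.algebraMap_apply A (Localization.AtPrime M) (FractionRing A)
            (c j)).symm
      _ = algebraMap A (FractionRing A) (d j) * z := (h2 j).symm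
  intro x
  rcases V.mem_or_inv_mem x with h | h
  · exact Or.inl (hVrange x h)
  · exact Or.inr (hVrange x⁻¹ h)
end

section
/- In the pullback of Theorem 12 (A = π^{-1}(K) for π : B → B/M and K a proper subfield of B/M), going down holds for the extension A ⊆ B. -/
open scoped nonZeroDivisors

lemma aux_prime (B : Type*) [CommRing B] (M : Ideal B) (A : Subring B)
    (hMA : ∀ b ∈ M, b ∈ A)
    (P' : Ideal A) (hP' : P'.IsPrime) (f : A) (hfM : (f : B) ∈ M) (hfP : f ∉ P') :
    ∃ Q' : Ideal B, Q'.IsPrime ∧ Q'.comap A.subtype = P' ∧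
      ∀ b : B, b ∈ Q' ↔ ∃ n : ℕ, ∃ a ∈ P', (f : B) ^ (n + 1) * b = a := by
  refine ⟨{ carrier := {b : B | ∃ n : ℕ, ∃ a ∈ P', (f : B) ^ (n + 1) * b = a}
            zero_mem' := ⟨0, 0, P'.zero_mem, by simp⟩
            add_mem' := ?_
            smul_mem' := ?_ }, ?_, ?_, fun b => Iff.rfl⟩
  · rintro x y ⟨n, a, ha, hax⟩ ⟨m, c, hc, hcy⟩
    refine ⟨n + m + 1, f ^ (m + 1) * a + f ^ (n + 1) * c,
      P'.add_mem (P'.mul_mem_left _ ha) (P'.mul_mem_left _ hc), ?_⟩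
    push_cast
    linear_combination (f : B) ^ (m + 1) * hax + (f : B) ^ (n + 1) * hcy
  · rintro c x ⟨n, a, ha, hax⟩
    refine ⟨n + 1, (⟨(f : B) * c, hMA _ (M.mul_mem_right c hfM)⟩ : A) * a,
      P'.mul_mem_left _ ha, ?_⟩
    push_cast
    simp only [smul_eq_mul]
    linear_combination ((f : B) * c) * hax
  · constructor
    · intro htop
      have h1 : (1 : B) ∈ (⊤ : Ideal B) := trivial
      rw [← htop] at h1
      obtain ⟨n, a, ha, hax⟩ := h1
      have : ((f ^ (n + 1) : A) : B) = (a : B) := by push_cast; linear_combination hax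
      have : (f : A) ^ (n + 1) ∈ P' := by
        rwa [show (f : A) ^ (n + 1) = a from Subtype.coe_injective this]
      exact hfP (hP'.mem_of_pow_mem _ this)
    · rintro x y ⟨n, a, ha, hax⟩
      have hu : (f : B) ^ (n + 2) * x ∈ A := by
        apply hMA
        have : (f : B) ^ (n + 2) * x = (f : B) * ((f : B) ^ (n + 1) * x) := by ring
        rw [this]
        exact M.mul_mem_right _ hfM
      have hv : (f : B) * y ∈ A := hMA _ (M.mul_mem_right y hfM)
      have key : (⟨_, hu⟩ : A) * ⟨_, hv⟩ ∈ P' := by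
        have : (⟨_, hu⟩ : A) * ⟨_, hv⟩ = f ^ 2 * a := by
          apply Subtype.coe_injective
          push_cast
          linear_combination (f : B) ^ 2 * hax
        rw [this]
        exact P'.mul_mem_left _ ha
      rcases hP'.mem_or_mem key with h | h
      · exact Or.inl ⟨n + 1, _, h, rfl⟩
      · exact Or.inr ⟨0, _, h, by rw [pow_one]⟩
  · ext a'
    simp only [Ideal.mem_comap, Subring.coe_subtype]
    constructor
    · rintro ⟨n, a, ha, hax⟩
      have : f ^ (n + 1) * a' = a := by
        apply Subtype.coe_injective
        push_cast
        linear_combination hax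
      have hmem : f ^ (n + 1) * a' ∈ P' := this ▸ ha
      rcases hP'.mem_or_mem hmem with h | h
      · exact absurd (hP'.mem_of_pow_mem _ h) hfP
      · exact h
    · intro ha'
      exact ⟨0, f * a', P'.mul_mem_left f ha', by simp [Subring.coe_subtype]⟩

lemma aux_le (B : Type*) [CommRing B] (M : Ideal B) (K : Subring (B ⧸ M))
    (hfield : ∀ x ∈ K, x ≠ 0 → ∃ y ∈ K, x * y = 1)
    (A : Subring B) (hA : A = Subring.comap (Ideal.Quotient.mk M) K)
    (hMA : ∀ b ∈ M, b ∈ A)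
    (I : Ideal A) (hI : I ≠ ⊤) (hle : M.comap A.subtype ≤ I) :
    I ≤ M.comap A.subtype := by
  intro a ha
  by_contra haM
  have haM' : (a : B) ∉ M := by
    simpa [Ideal.mem_comap, Subring.coe_subtype] using haM
  have haK : Ideal.Quotient.mk M (a : B) ∈ K := by
    have h : (a : B) ∈ Subring.comap (Ideal.Quotient.mk M) K := by rw [← hA]; exact a.2
    exact h
  have hne : Ideal.Quotient.mk M (a : B) ≠ 0 := by
    rwa [Ne, Ideal.Quotient.eq_zero_iff_mem]
  obtain ⟨y, hyK, hxy⟩ := hfield _ haK hne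
  obtain ⟨b, rfl⟩ := Ideal.Quotient.mk_surjective y
  have hbA : b ∈ A := by rw [hA]; exact Subring.mem_comap.mpr hyK
  have hm : ((a : B) * b - 1 : B) ∈ M := by
    rw [← Ideal.Quotient.eq_zero_iff_mem]
    rw [map_sub, map_mul, map_one, hxy, sub_self]
  have hmI : (⟨(a : B) * b - 1, hMA _ hm⟩ : A) ∈ I := by
    apply hle
    simpa [Ideal.mem_comap, Subring.coe_subtype] using hm
  have h1 : (1 : A) = a * ⟨b, hbA⟩ - ⟨(a : B) * b - 1, hMA _ hm⟩ := by
    apply Subtype.coe_injective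
    push_cast
    ring
  have : (1 : A) ∈ I := by
    rw [h1]
    exact I.sub_mem (I.mul_mem_right _ ha) hmI
  exact hI (Ideal.eq_top_iff_one I |>.mpr this)

/-- going down holds for `A ⊆ B` where `A` is the pullback of a proper
subfield `K` of `B/M`. -/
theorem pullback_going_down
    (B : Type*) [CommRing B] [IsDomain B] (M : Ideal B) (hM : M.IsMaximal)
    (K : Subring (B ⧸ M))
    (hfield : ∀ x ∈ K, x ≠ 0 → ∃ y ∈ K, x * y = 1)
    (hproper : K ≠ ⊤)
    (A : Subring B) (hA : A = Subring.comap (Ideal.Quotient.mk M) K) :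
    ∀ P' P : Ideal A, P'.IsPrime → P.IsPrime → P' ≤ P →
      ∀ Q : Ideal B, Q.IsPrime → Q.comap A.subtype = P →
        ∃ Q' : Ideal B, Q'.IsPrime ∧ Q' ≤ Q ∧ Q'.comap A.subtype = P' := by
  intro P' P hP' hP hle Q hQ hQP
  have hMA : ∀ b ∈ M, b ∈ A := by
    intro b hb
    rw [hA]
    simp only [Subring.mem_comap]
    rw [Ideal.Quotient.eq_zero_iff_mem.mpr hb]
    exact K.zero_mem
  by_cases hMP' : M.comap A.subtype ≤ P'
  · have h1 : P' ≤ M.comap A.subtype :=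
      aux_le B M K hfield A hA hMA P' hP'.ne_top hMP'
    have hPeq : P' = M.comap A.subtype := le_antisymm h1 hMP'
    refine ⟨M, hM.isPrime, ?_, hPeq.symm⟩
    intro b hb
    have hbA : b ∈ A := hMA b hb
    have h2 : (⟨b, hbA⟩ : A) ∈ P' := hMP' (by simpa [Ideal.mem_comap, Subring.coe_subtype] using hb)
    have h3 : (⟨b, hbA⟩ : A) ∈ P := hle h2
    rw [← hQP] at h3
    simpa [Ideal.mem_comap, Subring.coe_subtype] using h3
  · obtain ⟨f, hfM', hfP⟩ := SetLike.not_le_iff_exists.mp hMP'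
    have hfM : (f : B) ∈ M := by simpa [Ideal.mem_comap, Subring.coe_subtype] using hfM'
    by_cases hMQ : M ≤ Q
    · obtain ⟨Q', hQ'p, hQ'c, hmem⟩ := aux_prime B M A hMA P' hP' f hfM hfP
      refine ⟨Q', hQ'p, ?_, hQ'c⟩
      have hPM : P ≤ M.comap A.subtype := by
        apply aux_le B M K hfield A hA hMA P hP.ne_top
        intro a haM
        rw [← hQP, Ideal.mem_comap]
        exact hMQ (by simpa [Ideal.mem_comap, Subring.coe_subtype] using haM)
      intro b hb
      apply hMQ
      obtain ⟨n, a, ha, hab⟩ := (hmem b).mp hb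
      by_contra hbM
      obtain ⟨c, m, hm, hcm⟩ := hM.exists_inv hbM
      have hfc : (f : B) * c ∈ A := hMA _ (M.mul_mem_right c hfM)
      have hmA : m ∈ A := hMA m hm
      have key : (f : A) ^ (n + 2) * (1 - ⟨m, hmA⟩) = (⟨_, hfc⟩ : A) * a := by
        apply Subtype.coe_injective
        push_cast
        linear_combination ((f : B) * c) * hab - (f : B) ^ (n + 2) * hcm
      have hkey : (f : A) ^ (n + 2) * (1 - ⟨m, hmA⟩) ∈ P' := by
        rw [key]; exact P'.mul_mem_left _ ha
      rcases hP'.mem_or_mem hkey with h | h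
      · exact hfP (hP'.mem_of_pow_mem _ h)
      · have h2 : ((1 - ⟨m, hmA⟩ : A) : B) ∈ M := by
          have := hPM (hle h)
          simpa [Ideal.mem_comap, Subring.coe_subtype] using this
        have h3 : (1 : B) ∈ M := by
          have : ((1 - ⟨m, hmA⟩ : A) : B) + m = 1 := by push_cast; ring
          rw [← this]
          exact M.add_mem h2 hm
        exact hM.ne_top (Ideal.eq_top_iff_one M |>.mpr h3)
    · obtain ⟨g, hgM, hgQ⟩ := SetLike.not_le_iff_exists.mp hMQ
      have hgA : g ∈ A := hMA g hgM
      have hfP2 : (⟨g, hgA⟩ : A) ∉ P' := by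
        intro h
        have := hle h
        rw [← hQP] at this
        exact hgQ (by simpa [Ideal.mem_comap, Subring.coe_subtype] using this)
      obtain ⟨Q', hQ'p, hQ'c, hmem⟩ := aux_prime B M A hMA P' hP' ⟨g, hgA⟩ hgM hfP2
      refine ⟨Q', hQ'p, ?_, hQ'c⟩
      intro b hb
      obtain ⟨n, a, ha, hab⟩ := (hmem b).mp hb
      have haQ : (a : B) ∈ Q := by
        have := hle ha
        rw [← hQP] at this
        simpa [Ideal.mem_comap, Subring.coe_subtype] using this
      rw [← hab] at haQ
      rcases hQ.mem_or_mem haQ with h | h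
      · exact absurd (hQ.mem_of_pow_mem _ h) hgQ
      · exact h
end
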